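/- arXiv:2008.11144 — 7 statements merged into one kernel-verified Lean document; each statement's English description precedes it below -/
import Mathlib

section
/- Let M > 1 and let Ω ⊆ ℝⁿ be an M-uniform domain with |Ω| ≥ c₀ > 0. Then there exists r₀ > 0 depending only on M, n, c₀ such that Ω contains an open ball of radius r₀. -/
open MeasureTheory Metric Set

/-- A connected open set `Ω` is `M`-uniform if any two points of its closure can be joined
by a rectifiable curve in the closure of length at most `M` times their distance, which
stays at distance from the boundary at least `1/M` times the minimum of the distances to
the two endpoints. -/
def IsMUniform {n : ℕ} (M : ℝ) (Ω : Set (EuclideanSpace ℝ (Fin n))) : Prop :=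
  IsOpen Ω ∧ IsConnected Ω ∧
  ∀ x₁ ∈ closure Ω, ∀ x₂ ∈ closure Ω, ∃ γ : ℝ → EuclideanSpace ℝ (Fin n),
    ContinuousOn γ (Set.Icc 0 1) ∧ γ 0 = x₁ ∧ γ 1 = x₂ ∧
    (∀ t ∈ Set.Icc (0:ℝ) 1, γ t ∈ closure Ω) ∧
    eVariationOn γ (Set.Icc 0 1) ≤ ENNReal.ofReal (M * dist x₁ x₂) ∧
    (∀ t ∈ Set.Icc (0:ℝ) 1,
      Metric.infDist (γ t) (frontier Ω) ≥ (1 / M) * min (dist (γ t) x₁) (dist (γ t) x₂))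

/-- If a point of the closure of an open set is at distance more than `r > 0` from the
frontier, then the ball of radius `r` around it is contained in the set. -/
lemma ball_subset_of_infDist_frontier {n : ℕ} {Ω : Set (EuclideanSpace ℝ (Fin n))}
    (hΩ : IsOpen Ω) {z : EuclideanSpace ℝ (Fin n)} (hz : z ∈ closure Ω) {r : ℝ}
    (hr : 0 < r) (h : r < Metric.infDist z (frontier Ω)) : Metric.ball z r ⊆ Ω := by
  have hdisj : ∀ w ∈ Metric.ball z r, w ∉ frontier Ω := by
    intro w hw hwf
    have h1 : Metric.infDist z (frontier Ω) ≤ dist z w := Metric.infDist_le_dist_of_mem hwf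
    have h2 : dist z w < r := by rw [dist_comm]; exact Metric.mem_ball.1 hw
    linarith
  have hzΩ : z ∈ Ω := by
    by_contra hzn
    have hzf : z ∈ frontier Ω := by
      rw [frontier, hΩ.interior_eq]
      exact ⟨hz, hzn⟩
    have : Metric.infDist z (frontier Ω) = 0 := Metric.infDist_zero_of_mem hzf
    linarith
  have hsub : Metric.ball z r ⊆ Ω ∪ (closure Ω)ᶜ := by
    intro w hw
    by_cases hwc : w ∈ closure Ω
    · left
      rcases (closure_eq_self_union_frontier Ω ▸ hwc) with h1 | h1
      · exact h1
      · exact absurd h1 (hdisj w hw)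
    · exact Or.inr hwc
  have hdisj2 : Disjoint Ω (closure Ω)ᶜ :=
    Set.disjoint_left.2 fun x hx hx' => hx' (subset_closure hx)
  rcases IsPreconnected.subset_or_subset hΩ isClosed_closure.isOpen_compl hdisj2 hsub
      ((convex_ball z r).isPreconnected) with hs | hs
  · exact hs
  · exact absurd (hs (Metric.mem_ball_self hr)) (not_not.2 hz)

theorem MUniform_contains_ball (n : ℕ) (M c₀ : ℝ) (hM : 1 < M) (hc₀ : 0 < c₀) :
    ∃ r₀ : ℝ, 0 < r₀ ∧ ∀ Ω : Set (EuclideanSpace ℝ (Fin n)),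
      IsMUniform M Ω → ENNReal.ofReal c₀ ≤ volume Ω →
      ∃ z, Metric.ball z r₀ ⊆ Ω := by
  have hM0 : (0:ℝ) < M := lt_trans one_pos hM
  rcases Nat.eq_zero_or_pos n with hn | hn
  · -- trivial case n = 0 : the space is a subsingleton
    subst hn
    refine ⟨1, one_pos, fun Ω hΩ _ => ?_⟩
    obtain ⟨x, hx⟩ := hΩ.2.1.nonempty
    refine ⟨x, fun y _ => ?_⟩
    have : y = x := Subsingleton.elim y x
    rwa [this]
  -- main case : n ≥ 1
  set V : ENNReal := volume (Metric.closedBall (0 : EuclideanSpace ℝ (Fin n)) 1) with hV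
  have hVtop : V ≠ ⊤ := measure_closedBall_lt_top.ne
  have hVpos : 0 < V :=
    lt_of_lt_of_le (measure_ball_pos volume 0 one_pos)
      (measure_mono Metric.ball_subset_closedBall)
  set Vr : ℝ := V.toReal with hVrdef
  have hVr : 0 < Vr := ENNReal.toReal_pos hVpos.ne' hVtop
  set d : ℝ := min 1 (c₀ / (2 * Vr)) with hd_def
  have hd : 0 < d := lt_min one_pos (div_pos hc₀ (by linarith))
  have hd1 : d ≤ 1 := min_le_left _ _
  have hdn : d ^ n * Vr ≤ c₀ / 2 := by
    have h1 : d ^ n ≤ d := by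
      calc d ^ n ≤ d ^ 1 := pow_le_pow_of_le_one hd.le hd1 hn
        _ = d := pow_one d
    have h2 : d ≤ c₀ / (2 * Vr) := min_le_right _ _
    calc d ^ n * Vr ≤ (c₀ / (2 * Vr)) * Vr := by
          apply mul_le_mul_of_nonneg_right (h1.trans h2) hVr.le
      _ = c₀ / 2 := by field_simp
  refine ⟨d / (4 * M), div_pos hd (by linarith), fun Ω hΩ hvol => ?_⟩
  obtain ⟨hopen, hconn, hcurve⟩ := hΩ
  -- find two far-apart points
  have hfar : ∃ x₁ ∈ Ω, ∃ x₂ ∈ Ω, d < dist x₁ x₂ := by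
    by_contra hcon
    push_neg at hcon
    obtain ⟨x₀, hx₀⟩ := hconn.nonempty
    have hsub : Ω ⊆ Metric.closedBall x₀ d := fun y hy =>
      Metric.mem_closedBall.2 (dist_comm y x₀ ▸ (dist_comm x₀ y ▸ hcon x₀ hx₀ y hy))
    have hle : volume Ω ≤ ENNReal.ofReal (d ^ n) * V := by
      calc volume Ω ≤ volume (Metric.closedBall x₀ d) := measure_mono hsub
        _ = ENNReal.ofReal (d ^ Module.finrank ℝ (EuclideanSpace ℝ (Fin n))) *
              volume (Metric.closedBall 0 1) :=
            Measure.addHaar_closedBall' volume x₀ hd.le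
        _ = ENNReal.ofReal (d ^ n) * V := by rw [finrank_euclideanSpace_fin]
    have : ENNReal.ofReal c₀ ≤ ENNReal.ofReal (d ^ n * Vr) := by
      refine hvol.trans (hle.trans (le_of_eq ?_))
      rw [← ENNReal.ofReal_toReal hVtop, ← ENNReal.ofReal_mul (by positivity)]
    have hlt : d ^ n * Vr < c₀ := lt_of_le_of_lt hdn (by linarith)
    have := (ENNReal.ofReal_le_ofReal_iff (by positivity)).1 this
    linarith
  obtain ⟨x₁, hx₁, x₂, hx₂, hdist⟩ := hfar
  obtain ⟨γ, hγc, hγ0, hγ1, hγcl, _, hγd⟩ :=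
    hcurve x₁ (subset_closure hx₁) x₂ (subset_closure hx₂)
  set D : ℝ := dist x₁ x₂ with hD
  have hD0 : 0 < D := lt_trans hd hdist
  -- intermediate value: find t with dist (γ t) x₁ = D / 2
  have hfc : ContinuousOn (fun t => dist (γ t) x₁) (Set.Icc (0:ℝ) 1) :=
    (continuous_id.dist continuous_const).comp_continuousOn hγc
  have hIVT := intermediate_value_Icc (zero_le_one (α := ℝ)) hfc
  have hmem : D / 2 ∈ Set.Icc (dist (γ 0) x₁) (dist (γ 1) x₁) := by
    rw [hγ0, hγ1, dist_self, dist_comm]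
    exact ⟨by linarith, by linarith⟩
  obtain ⟨t, ht, hft⟩ := hIVT hmem
  set z := γ t with hz
  have hz1 : dist z x₁ = D / 2 := hft
  have hz2 : D / 2 ≤ dist z x₂ := by
    have := dist_triangle x₁ z x₂
    rw [dist_comm x₁ z] at this
    linarith [hD ▸ this]
  have hmin : d / 2 ≤ min (dist z x₁) (dist z x₂) :=
    le_min (by rw [hz1]; linarith) (by linarith)
  have hinf : d / (2 * M) ≤ Metric.infDist z (frontier Ω) := by
    have h1 := hγd t ht
    have h2 : (1 / M) * (d / 2) ≤ (1 / M) * min (dist z x₁) (dist z x₂) :=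
      mul_le_mul_of_nonneg_left hmin (by positivity)
    have h3 : d / (2 * M) = (1 / M) * (d / 2) := by field_simp
    rw [h3]
    exact h2.trans h1
  have hr_lt : d / (4 * M) < Metric.infDist z (frontier Ω) := by
    have : d / (4 * M) < d / (2 * M) := by
      apply div_lt_div_of_pos_left hd (by linarith) (by linarith)
    linarith
  have hzcl : z ∈ closure Ω := hγcl t ht
  exact ⟨z, ball_subset_of_infDist_frontier hopen hzcl (div_pos hd (by linarith)) hr_lt⟩
end

section
/- Let D_i ⊆ B_{R₀} ⊆ ℝⁿ be measurable sets, each satisfying the uniform lower density bound |B_r(x) ∩ D_i| > c rⁿ for all x ∈ ∂D_i and 0 < r < diam(D_i), and suppose χ_{D_i} → χ_D in L¹, where D is normalized so that 0 < |D ∩ B_r(x)| < ω_n rⁿ for all x ∈ ∂D and r > 0. Then for every ε > 0 there exists N such that for all i > N: D ⊆ D_i^ε, where D_i^ε = {x : dist(x, D_i) < ε}. -/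
open MeasureTheory Metric Set Filter

theorem limit_in_neighborhood_of_sets {n : ℕ} (R₀ c : ℝ) (hc : 0 < c)
    (D : ℕ → Set (EuclideanSpace ℝ (Fin n))) (Dlim : Set (EuclideanSpace ℝ (Fin n)))
    (hsub : ∀ i, D i ⊆ Metric.ball 0 R₀)
    (hmeas : ∀ i, MeasurableSet (D i)) (hmeasD : MeasurableSet Dlim)
    (hdens : ∀ i, ∀ x ∈ frontier (D i), ∀ r : ℝ, 0 < r → r < Metric.diam (D i) →
      ENNReal.ofReal (c * r ^ n) < volume (Metric.ball x r ∩ D i))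
    (hconv : Tendsto (fun i => volume (symmDiff (D i) Dlim)) atTop (nhds 0))
    (hnorm : ∀ x ∈ frontier Dlim, ∀ r : ℝ, 0 < r →
      0 < volume (Dlim ∩ Metric.ball x r) ∧
      volume (Dlim ∩ Metric.ball x r) <
        ENNReal.ofReal
          ((volume (Metric.ball (0 : EuclideanSpace ℝ (Fin n)) 1)).toReal * r ^ n)) :
    ∀ ε : ℝ, 0 < ε → ∃ N : ℕ, ∀ i > N,
      Dlim ⊆ {x | Metric.infDist x (D i) < ε} := by
  intro ε hε
  -- positivity of local measure at every point of Dlim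
  have hpos : ∀ x ∈ Dlim, ∀ r : ℝ, 0 < r → 0 < volume (Dlim ∩ Metric.ball x r) := by
    intro x hx r hr
    by_cases hxf : x ∈ frontier Dlim
    · exact (hnorm x hxf r hr).1
    · have hxi : x ∈ interior Dlim := by
        have hxc : x ∈ closure Dlim := subset_closure hx
        by_contra h
        exact hxf ⟨hxc, h⟩
      obtain ⟨r', hr', hball⟩ := Metric.isOpen_iff.1 isOpen_interior x hxi
      have hsubset : Metric.ball x (min r r') ⊆ Dlim ∩ Metric.ball x r := by
        intro y hy
        have h1 : y ∈ Metric.ball x r' := Metric.ball_subset_ball (min_le_right r r') hy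
        have h2 : y ∈ Metric.ball x r := Metric.ball_subset_ball (min_le_left r r') hy
        exact ⟨interior_subset (hball h1), h2⟩
      calc (0 : ENNReal) < volume (Metric.ball x (min r r')) :=
            Metric.measure_ball_pos _ _ (lt_min hr hr')
        _ ≤ volume (Dlim ∩ Metric.ball x r) := measure_mono hsubset
  -- trivial case: Dlim empty
  rcases Set.eq_empty_or_nonempty Dlim with hemp | hne
  · exact ⟨0, fun i _ => by simp [hemp]⟩
  -- Dlim essentially lies in ball 0 R₀
  have hzero : volume (Dlim \ Metric.ball 0 R₀) = 0 := by
    have hle : ∀ i, volume (Dlim \ Metric.ball 0 R₀) ≤ volume (symmDiff (D i) Dlim) := by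
      intro i
      apply measure_mono
      intro y hy
      exact Set.mem_symmDiff.2 (Or.inr ⟨hy.1, fun h => hy.2 (hsub i h)⟩)
    have := ge_of_tendsto' hconv hle
    exact le_antisymm (by simpa using this) zero_le
  -- Dlim is bounded
  have hbdd : Dlim ⊆ Metric.closedBall 0 R₀ := by
    intro x hx
    by_contra hxo
    rw [Metric.mem_closedBall, not_le] at hxo
    have hr : 0 < dist x 0 - R₀ := sub_pos.2 hxo
    have hdisj : Dlim ∩ Metric.ball x (dist x 0 - R₀) ⊆ Dlim \ Metric.ball 0 R₀ := by
      intro y hy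
      refine ⟨hy.1, fun hy0 => ?_⟩
      have h1 : dist y 0 < R₀ := Metric.mem_ball.1 hy0
      have h2 : dist y x < dist x 0 - R₀ := Metric.mem_ball.1 hy.2
      have h3 : dist x 0 ≤ dist x y + dist y 0 := dist_triangle x y 0
      rw [dist_comm x y] at h3
      linarith
    have h0 := (hpos x hx _ hr).trans_le (measure_mono hdisj)
    rw [hzero] at h0
    exact lt_irrefl _ h0
  -- closure Dlim is compact
  have hcomp : IsCompact (closure Dlim) :=
    (isCompact_closedBall (0 : EuclideanSpace ℝ (Fin n)) R₀).of_isClosed_subset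
      isClosed_closure (closure_minimal hbdd Metric.isClosed_closedBall)
  -- cover by ε/3-balls centered in Dlim
  have hε3 : 0 < ε / 3 := by linarith
  have hcover : closure Dlim ⊆ ⋃ x : Dlim, Metric.ball (x : EuclideanSpace ℝ (Fin n)) (ε/3) := by
    intro y hy
    obtain ⟨x, hxD, hxd⟩ := Metric.mem_closure_iff.1 hy (ε/3) hε3
    exact Set.mem_iUnion.2 ⟨⟨x, hxD⟩, Metric.mem_ball.2 hxd⟩
  obtain ⟨t, ht⟩ := hcomp.elim_finite_subcover
    (fun x : Dlim => Metric.ball (x : EuclideanSpace ℝ (Fin n)) (ε/3))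
    (fun _ => Metric.isOpen_ball) hcover
  have htne : t.Nonempty := by
    obtain ⟨x, hx⟩ := hne
    have hxc := ht (subset_closure hx)
    simp only [Set.mem_iUnion] at hxc
    obtain ⟨j, hj, _⟩ := hxc
    exact ⟨j, hj⟩
  set δ : ENNReal := t.inf' htne
    (fun x => volume (Dlim ∩ Metric.ball (x : EuclideanSpace ℝ (Fin n)) (ε/3))) with hδdef
  have hδ : 0 < δ := by
    rw [hδdef, Finset.lt_inf'_iff]
    exact fun j _ => hpos j j.2 _ hε3
  have hev : ∀ᶠ i in atTop, volume (symmDiff (D i) Dlim) < δ :=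
    hconv.eventually_lt_const hδ
  rw [eventually_atTop] at hev
  obtain ⟨N, hN⟩ := hev
  refine ⟨N, fun i hi x hx => ?_⟩
  have hvol : volume (symmDiff (D i) Dlim) < δ := hN i hi.le
  have hxc := ht (subset_closure hx)
  simp only [Set.mem_iUnion] at hxc
  obtain ⟨j, hj, hxj⟩ := hxc
  have hδle : δ ≤ volume (Dlim ∩ Metric.ball (j : EuclideanSpace ℝ (Fin n)) (ε/3)) :=
    Finset.inf'_le _ hj
  -- D i must meet the ball around j
  have hmeet : (D i ∩ Metric.ball (j : EuclideanSpace ℝ (Fin n)) (ε/3)).Nonempty := by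
    by_contra hemp'
    rw [Set.not_nonempty_iff_eq_empty] at hemp'
    have hsplit : Dlim ∩ Metric.ball (j : EuclideanSpace ℝ (Fin n)) (ε/3) ⊆
        (Dlim \ D i) ∪ (D i ∩ Metric.ball (j : EuclideanSpace ℝ (Fin n)) (ε/3)) := by
      intro y hy
      by_cases hyD : y ∈ D i
      · exact Or.inr ⟨hyD, hy.2⟩
      · exact Or.inl ⟨hy.1, hyD⟩
    have h1 : volume (Dlim ∩ Metric.ball (j : EuclideanSpace ℝ (Fin n)) (ε/3)) ≤
        volume (Dlim \ D i) := by
      rw [hemp', Set.union_empty] at hsplit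
      exact measure_mono hsplit
    have h2 : volume (Dlim \ D i) ≤ volume (symmDiff (D i) Dlim) :=
      measure_mono fun y hy => Set.mem_symmDiff.2 (Or.inr ⟨hy.1, hy.2⟩)
    exact absurd ((hδle.trans h1).trans h2) (not_le.2 hvol)
  obtain ⟨y, hyD, hyb⟩ := hmeet
  have h1 : dist x (j : EuclideanSpace ℝ (Fin n)) < ε/3 := Metric.mem_ball.1 hxj
  have h2 : dist y (j : EuclideanSpace ℝ (Fin n)) < ε/3 := Metric.mem_ball.1 hyb
  have h3 : Metric.infDist x (D i) ≤ dist x y := Metric.infDist_le_dist_of_mem hyD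
  have h4 : dist x y ≤ dist x (j : EuclideanSpace ℝ (Fin n)) + dist y (j : EuclideanSpace ℝ (Fin n)) :=
    dist_triangle_right x y _
  show Metric.infDist x (D i) < ε
  linarith
end

section
/- Let D_i ⊆ B_{R₀} ⊆ ℝⁿ be measurable sets satisfying the uniform lower density bound (|B_r(x) ∩ D_i| > c rⁿ for x ∈ ∂D_i, 0 < r < diam(D_i)), and suppose |D_i Δ D| → 0 where D satisfies 0 < |D ∩ B_r(x)| < ω_n rⁿ for all x ∈ ∂D, r > 0. Then for every ε > 0 there exists N such that for all i > N one has (D_i)_ε ⊆ D, where (D_i)_ε = {x : B_ε(x) ⊆ D_i}. -/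
open MeasureTheory Metric Set Filter

theorem inner_core_subset_limit {n : ℕ} (R₀ c : ℝ) (hc : 0 < c)
    (D : ℕ → Set (EuclideanSpace ℝ (Fin n))) (Dlim : Set (EuclideanSpace ℝ (Fin n)))
    (hsub : ∀ i, D i ⊆ Metric.ball 0 R₀)
    (hmeas : ∀ i, MeasurableSet (D i)) (hmeasD : MeasurableSet Dlim)
    (hdens : ∀ i, ∀ x ∈ frontier (D i), ∀ r : ℝ, 0 < r → r < Metric.diam (D i) →
      ENNReal.ofReal (c * r ^ n) < volume (Metric.ball x r ∩ D i))
    (hconv : Tendsto (fun i => volume (symmDiff (D i) Dlim)) atTop (nhds 0))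
    (hnorm : ∀ x ∈ frontier Dlim, ∀ r : ℝ, 0 < r →
      0 < volume (Dlim ∩ Metric.ball x r) ∧
      volume (Dlim ∩ Metric.ball x r) <
        ENNReal.ofReal
          ((volume (Metric.ball (0 : EuclideanSpace ℝ (Fin n)) 1)).toReal * r ^ n)) :
    ∀ ε : ℝ, 0 < ε → ∃ N : ℕ, ∀ i > N,
      {x | Metric.ball x ε ⊆ D i} ⊆ Dlim := by
  intro ε hε
  set r : ℝ := ε / 2 with hrdef
  have hr0 : 0 < r := by positivity
  set C : Set (EuclideanSpace ℝ (Fin n)) :=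
    closedBall 0 R₀ \ interior Dlim with hCdef
  -- positivity of the "escaping mass" at each point of C
  have key : ∀ x ∈ C, 0 < volume (ball x r \ Dlim) := by
    rintro x ⟨-, hxi⟩
    by_cases hxc : x ∈ closure Dlim
    · -- frontier case
      have hxf : x ∈ frontier Dlim := ⟨hxc, hxi⟩
      by_cases hnt : Nontrivial (EuclideanSpace ℝ (Fin n))
      swap
      · haveI := not_nontrivial_iff_subsingleton.1 hnt
        exfalso
        rcases Set.eq_empty_or_nonempty Dlim with h | ⟨a, ha⟩
        · rw [h, frontier_empty] at hxf; exact hxf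
        · have : Dlim = Set.univ := Set.eq_univ_of_forall fun b => Subsingleton.elim a b ▸ ha
          rw [this, frontier_univ] at hxf; exact hxf
      obtain ⟨-, hlt⟩ := hnorm x hxf r hr0
      have hball : volume (ball x r) =
          ENNReal.ofReal
            ((volume (Metric.ball (0 : EuclideanSpace ℝ (Fin n)) 1)).toReal * r ^ n) := by
        rw [Measure.addHaar_ball volume x hr0.le,
          ENNReal.ofReal_mul ENNReal.toReal_nonneg,
          ENNReal.ofReal_toReal measure_ball_lt_top.ne, finrank_euclideanSpace_fin,
          mul_comm]
      by_contra h
      have h0 : volume (ball x r \ Dlim) = 0 := by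
        simpa using (not_lt.1 h)
      have hle : volume (ball x r) ≤ volume (Dlim ∩ ball x r) := by
        calc volume (ball x r)
            ≤ volume (ball x r ∩ Dlim) + volume (ball x r \ Dlim) :=
              measure_le_inter_add_diff _ _ _
          _ = volume (Dlim ∩ ball x r) := by rw [h0, add_zero, inter_comm]
      rw [hball] at hle
      exact absurd (lt_of_le_of_lt hle hlt) (lt_irrefl _)
    · -- exterior case
      have hxo : x ∈ interior Dlimᶜ := by
        rwa [interior_compl, mem_compl_iff]
      obtain ⟨δ, hδ0, hδ⟩ := Metric.isOpen_iff.1 isOpen_interior x hxo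
      have hsub' : ball x (min δ r) ⊆ ball x r \ Dlim := by
        intro z hz
        refine ⟨ball_subset_ball (min_le_right _ _) hz, ?_⟩
        have : z ∈ interior Dlimᶜ := hδ (ball_subset_ball (min_le_left _ _) hz)
        exact interior_subset this
      exact lt_of_lt_of_le (measure_ball_pos volume x (lt_min hδ0 hr0))
        (measure_mono hsub')
  -- compactness
  have hCc : IsCompact C :=
    (isCompact_closedBall _ _).diff isOpen_interior
  obtain ⟨t, hts, hcov⟩ :=
    hCc.elim_nhds_subcover (fun x => ball x r) (fun x _ => ball_mem_nhds x hr0)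
  set m : ENNReal := t.inf (fun x => volume (ball x r \ Dlim)) with hmdef
  have hm : 0 < m := by
    rw [hmdef, Finset.lt_inf_iff (by simp : (0 : ENNReal) < ⊤)]
    exact fun y hy => key y (hts y hy)
  obtain ⟨N, hN⟩ := eventually_atTop.1 (hconv.eventually (gt_mem_nhds hm))
  refine ⟨N, fun i hi x hx => ?_⟩
  by_contra hxD
  have hxDi : x ∈ D i := hx (mem_ball_self hε)
  have hxC : x ∈ C :=
    ⟨ball_subset_closedBall (hsub i hxDi), fun h => hxD (interior_subset h)⟩
  obtain ⟨y, hyt, hxy⟩ := mem_iUnion₂.1 (hcov hxC)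
  have hball_sub : ball y r ⊆ ball x ε := by
    intro z hz
    rw [mem_ball] at hz hxy ⊢
    calc dist z x ≤ dist z y + dist y x := dist_triangle _ _ _
      _ < r + r := by
          rw [dist_comm y x]
          exact add_lt_add hz hxy
      _ = ε := by rw [hrdef]; ring
  have hsub2 : ball y r \ Dlim ⊆ symmDiff (D i) Dlim := by
    rintro z ⟨hz1, hz2⟩
    rw [Set.mem_symmDiff]
    exact Or.inl ⟨hx (hball_sub hz1), hz2⟩
  have h1 : m ≤ volume (ball y r \ Dlim) := Finset.inf_le hyt
  exact absurd (h1.trans (measure_mono hsub2)) (not_le.2 (hN i hi.le))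
end

section
/- Let D_i ⊆ B_{R₀} ⊆ ℝⁿ satisfy the uniform lower density bound |B_r(x) ∩ D_i| > c rⁿ for all x ∈ ∂D_i and 0 < r < diam(D_i), and suppose |D_i Δ D| → 0 with D normalized so that 0 < |D ∩ B_r(x)| < ω_n rⁿ for all x ∈ ∂D, r > 0. Then for every ε > 0 there exists N such that D_i ⊆ D^ε for all i > N, where D^ε = {x : dist(x, D) < ε}. Consequently the Hausdorff distance d_H(D_i, D) tends to 0. -/
open MeasureTheory Metric Set Filter ENNReal

/-- A preconnected set meeting both `s` and its complement meets `frontier s`. -/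
lemma aux_preconnected_frontier {X : Type*} [TopologicalSpace X] {t s : Set X}
    (ht : IsPreconnected t) (h1 : (t ∩ s).Nonempty) (h2 : (t \ s).Nonempty) :
    (t ∩ frontier s).Nonempty := by
  by_contra h
  rw [Set.not_nonempty_iff_eq_empty] at h
  have hsub : t ⊆ interior s ∪ (closure s)ᶜ := by
    intro x hx
    by_cases hxc : x ∈ closure s
    · left
      by_contra hxi
      have : x ∈ frontier s := ⟨hxc, hxi⟩
      exact Set.eq_empty_iff_forall_notMem.1 h x ⟨hx, this⟩
    · right; exact hxc
  have h1' : (t ∩ interior s).Nonempty := by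
    obtain ⟨x, hxt, hxs⟩ := h1
    rcases hsub hxt with hi | hc
    · exact ⟨x, hxt, hi⟩
    · exact absurd (subset_closure hxs) hc
  have h2' : (t ∩ (closure s)ᶜ).Nonempty := by
    obtain ⟨x, hxt, hxs⟩ := h2
    rcases hsub hxt with hi | hc
    · exact absurd (interior_subset hi) hxs
    · exact ⟨x, hxt, hc⟩
  obtain ⟨x, hxt, hxi, hxc⟩ := ht (interior s) (closure s)ᶜ isOpen_interior
    isClosed_closure.isOpen_compl hsub h1' h2'
  exact hxc (subset_closure (interior_subset hxi))

theorem sets_subset_limit_neighborhood_and_hausdorff {n : ℕ} (R₀ c : ℝ) (hc : 0 < c)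
    (D : ℕ → Set (EuclideanSpace ℝ (Fin n))) (Dlim : Set (EuclideanSpace ℝ (Fin n)))
    (hsub : ∀ i, D i ⊆ Metric.ball 0 R₀)
    (hmeas : ∀ i, MeasurableSet (D i)) (hmeasD : MeasurableSet Dlim)
    (hdens : ∀ i, ∀ x ∈ frontier (D i), ∀ r : ℝ, 0 < r → r < Metric.diam (D i) →
      ENNReal.ofReal (c * r ^ n) < volume (Metric.ball x r ∩ D i))
    (hconv : Tendsto (fun i => volume (symmDiff (D i) Dlim)) atTop (nhds 0))
    (hnorm : ∀ x ∈ frontier Dlim, ∀ r : ℝ, 0 < r →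
      0 < volume (Dlim ∩ Metric.ball x r) ∧
      volume (Dlim ∩ Metric.ball x r) <
        ENNReal.ofReal
          ((volume (Metric.ball (0 : EuclideanSpace ℝ (Fin n)) 1)).toReal * r ^ n)) :
    (∀ ε : ℝ, 0 < ε → ∃ N : ℕ, ∀ i > N,
      D i ⊆ {x | Metric.infDist x Dlim < ε}) ∧
    Tendsto (fun i => Metric.hausdorffDist (D i) Dlim) atTop (nhds 0) := by
  -- Eventual smallness of the symmetric difference
  have heventlt : ∀ δ : ℝ≥0∞, 0 < δ → ∃ N : ℕ, ∀ i > N,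
      volume (symmDiff (D i) Dlim) < δ := by
    intro δ hδ
    obtain ⟨N, hN⟩ := eventually_atTop.1 (hconv.eventually_lt_const hδ)
    exact ⟨N, fun i hi => hN i hi.le⟩
  by_cases hD0 : volume Dlim = 0
  · -- degenerate case : `Dlim` is empty
    have hfr : frontier Dlim = ∅ := by
      rw [Set.eq_empty_iff_forall_notMem]
      intro x hx
      have h1 := (hnorm x hx 1 one_pos).1
      have h2 : volume (Dlim ∩ Metric.ball x 1) ≤ volume Dlim :=
        measure_mono Set.inter_subset_left
      rw [hD0] at h2
      exact absurd (le_antisymm h2 zero_le).symm h1.ne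
    have hDempty : Dlim = ∅ := by
      rcases frontier_eq_empty_iff.1 hfr with h | h
      · exact h
      · exfalso
        have : (0 : ℝ≥0∞) < volume (Metric.ball (0 : EuclideanSpace ℝ (Fin n)) 1) :=
          measure_ball_pos volume _ one_pos
        have hle : volume (Metric.ball (0 : EuclideanSpace ℝ (Fin n)) 1) ≤ volume Dlim := by
          rw [h]; exact measure_mono (Set.subset_univ _)
        rw [hD0] at hle
        exact absurd (le_antisymm hle zero_le).symm this.ne
    subst hDempty
    constructor
    · intro ε hε
      exact ⟨0, fun i _ x _ => by simpa [Metric.infDist_empty] using hε⟩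
    · simpa [Metric.hausdorffDist_empty] using
        (tendsto_const_nhds : Tendsto (fun _ : ℕ => (0 : ℝ)) atTop (nhds 0))
  · have hμ : 0 < volume Dlim := pos_iff_ne_zero.2 hD0
    have hne : Dlim.Nonempty := nonempty_of_measure_ne_zero hD0
    -- Key part A : D i is eventually in the ε-neighborhood of Dlim
    have keyA : ∀ ε : ℝ, 0 < ε → ∃ N : ℕ, ∀ i > N, ∀ x ∈ D i,
        Metric.infDist x Dlim < ε := by
      intro ε hε
      set δ : ℝ≥0∞ := min (min (volume Dlim) (volume (Metric.ball (0 : EuclideanSpace ℝ (Fin n)) (ε/4))))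
        (ENNReal.ofReal (c * (ε/4) ^ n)) with hδdef
      have hδ : 0 < δ := by
        refine lt_min (lt_min hμ (measure_ball_pos volume _ (by positivity))) ?_
        exact ENNReal.ofReal_pos.2 (by positivity)
      obtain ⟨N, hN⟩ := heventlt δ hδ
      refine ⟨N, fun i hi x hx => ?_⟩
      by_contra hcon
      push_neg at hcon
      -- the ball of radius ε around x misses Dlim
      have hdisj : ∀ y ∈ Dlim, y ∉ Metric.ball x ε := by
        intro y hy hyb
        have h1 : Metric.infDist x Dlim ≤ dist x y := Metric.infDist_le_dist_of_mem hy
        rw [Metric.mem_ball, dist_comm] at hyb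
        exact absurd (h1.trans_lt hyb) (not_lt.2 hcon)
      have hsub2 : Metric.ball x ε ∩ D i ⊆ symmDiff (D i) Dlim := by
        intro z ⟨hzb, hzD⟩
        rw [Set.mem_symmDiff]
        exact Or.inl ⟨hzD, fun hzl => hdisj z hzl hzb⟩
      have hvol2 : volume (Metric.ball x ε ∩ D i) < δ :=
        lt_of_le_of_lt (measure_mono hsub2) (hN i hi)
      by_cases hball : Metric.ball x (ε/4) ⊆ D i
      · -- inner ball case
        have h1 : Metric.ball x (ε/4) ⊆ Metric.ball x ε ∩ D i := by
          refine Set.subset_inter (Metric.ball_subset_ball (by linarith)) hball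
        have h2 : volume (Metric.ball (0 : EuclideanSpace ℝ (Fin n)) (ε/4)) ≤ volume (Metric.ball x ε ∩ D i) := by
          rw [← Measure.addHaar_ball_center volume x (ε/4)]
          exact measure_mono h1
        have h3 : δ ≤ volume (Metric.ball (0 : EuclideanSpace ℝ (Fin n)) (ε/4)) :=
          le_trans (min_le_left _ _) (min_le_right _ _)
        exact lt_irrefl δ ((h3.trans h2).trans_lt hvol2)
      · obtain ⟨z, hzb, hzD⟩ := Set.not_subset.1 hball
        by_cases hdiam : Metric.diam (D i) ≤ ε/4
        · -- tiny diameter case : D i disjoint from Dlim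
          have hbd : Bornology.IsBounded (D i) :=
            (Metric.isBounded_ball).subset (hsub i)
          have hDsub : D i ⊆ Metric.ball x ε := by
            intro w hw
            have := Metric.dist_le_diam_of_mem hbd hw hx
            rw [Metric.mem_ball]
            linarith
          have hDl : Dlim ⊆ symmDiff (D i) Dlim := by
            intro y hy
            rw [Set.mem_symmDiff]
            exact Or.inr ⟨hy, fun hyD => hdisj y hy (hDsub hyD)⟩
          have h1 : volume Dlim ≤ volume (symmDiff (D i) Dlim) := measure_mono hDl
          have h2 : δ ≤ volume Dlim := le_trans (min_le_left _ _) (min_le_left _ _)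
          exact lt_irrefl δ ((h2.trans h1).trans_lt (hN i hi))
        · push_neg at hdiam
          -- find a frontier point of D i near x
          have hseg : segment ℝ x z ⊆ Metric.ball x (ε/4) :=
            (convex_ball x (ε/4)).segment_subset (Metric.mem_ball_self (by positivity)) hzb
          obtain ⟨y, hyseg, hyfr⟩ := aux_preconnected_frontier
            (convex_segment x z).isPreconnected
            ⟨x, left_mem_segment ℝ x z, hx⟩ ⟨z, right_mem_segment ℝ x z, hzD⟩
          have hyx : dist y x < ε/4 := by
            have := hseg hyseg; rwa [Metric.mem_ball] at this
          have hdy := hdens i y hyfr (ε/4) (by positivity) hdiam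
          have hbsub : Metric.ball y (ε/4) ⊆ Metric.ball x ε := by
            intro w hw
            rw [Metric.mem_ball] at hw ⊢
            calc dist w x ≤ dist w y + dist y x := dist_triangle w y x
              _ < ε/4 + ε/4 := by linarith
              _ < ε := by linarith
          have h1 : volume (Metric.ball y (ε/4) ∩ D i) ≤ volume (Metric.ball x ε ∩ D i) :=
            measure_mono (Set.inter_subset_inter_left _ hbsub)
          have h2 : δ ≤ ENNReal.ofReal (c * (ε/4) ^ n) := min_le_right _ _
          exact lt_irrefl δ (((h2.trans_lt hdy).trans_le h1).trans hvol2)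
    -- Key part B : Dlim is eventually in the ε-neighborhood of D i
    have hnull : volume (Dlim \ Metric.ball 0 R₀) = 0 := by
      have hle : ∀ i, volume (Dlim \ Metric.ball 0 R₀) ≤ volume (symmDiff (D i) Dlim) := by
        intro i
        refine measure_mono fun y ⟨hy, hyb⟩ => ?_
        rw [Set.mem_symmDiff]
        exact Or.inr ⟨hy, fun hyD => hyb (hsub i hyD)⟩
      have := ge_of_tendsto' hconv hle
      exact le_antisymm this zero_le
    have hposloc : ∀ x ∈ closure Dlim, ∀ r : ℝ, 0 < r →
        0 < volume (Dlim ∩ Metric.ball x r) := by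
      intro x hx r hr
      by_cases hxi : x ∈ interior Dlim
      · obtain ⟨t, ht, htsub⟩ := Metric.mem_nhds_iff.1 (mem_interior_iff_mem_nhds.1 hxi)
        have h1 : Metric.ball x (min t r) ⊆ Dlim ∩ Metric.ball x r :=
          Set.subset_inter ((Metric.ball_subset_ball (min_le_left _ _)).trans htsub)
            (Metric.ball_subset_ball (min_le_right _ _))
        exact lt_of_lt_of_le (measure_ball_pos volume x (lt_min ht hr)) (measure_mono h1)
      · exact (hnorm x ⟨hx, hxi⟩ r hr).1
    have hbdd : closure Dlim ⊆ Metric.closedBall (0 : EuclideanSpace ℝ (Fin n)) (R₀ + 1) := by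
      refine closure_minimal ?_ Metric.isClosed_closedBall
      intro x hx
      rw [Metric.mem_closedBall]
      by_contra hcon
      push_neg at hcon
      have hloc := hposloc x (subset_closure hx) 1 one_pos
      have h1 : Dlim ∩ Metric.ball x 1 ⊆ Dlim \ Metric.ball 0 R₀ := by
        rintro y ⟨hy, hyb⟩
        refine ⟨hy, fun hyB => ?_⟩
        rw [Metric.mem_ball] at hyb hyB
        have := dist_triangle x y (0 : EuclideanSpace ℝ (Fin n))
        rw [dist_comm x y] at this
        linarith
      have := (measure_mono h1).trans_eq hnull
      exact absurd (le_antisymm this zero_le).symm hloc.ne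
    have hK : IsCompact (closure Dlim) :=
      (isCompact_closedBall (0 : EuclideanSpace ℝ (Fin n)) (R₀ + 1)).of_isClosed_subset isClosed_closure hbdd
    have keyB : ∀ ε : ℝ, 0 < ε → ∃ N : ℕ, ∀ i > N, ∀ x ∈ Dlim,
        Metric.infDist x (D i) < ε := by
      intro ε hε
      obtain ⟨b, hbK, hbfin, hbcov⟩ := hK.elim_finite_subcover_image
        (fun y (_ : y ∈ closure Dlim) => Metric.isOpen_ball (x := y) (ε := ε/2))
        (fun x hx => Set.mem_biUnion hx (Metric.mem_ball_self (by positivity)))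
      set δ : ℝ≥0∞ := hbfin.toFinset.inf (fun y => volume (Dlim ∩ Metric.ball y (ε/2)))
        with hδdef
      have hδ : 0 < δ := by
        rw [hδdef, Finset.lt_inf_iff (by simp : (0:ℝ≥0∞) < ⊤)]
        intro y hy
        exact hposloc y (hbK (hbfin.mem_toFinset.1 hy)) (ε/2) (by positivity)
      obtain ⟨N, hN⟩ := heventlt δ hδ
      refine ⟨N, fun i hi x hx => ?_⟩
      obtain ⟨y, hyb, hxy⟩ := Set.mem_iUnion₂.1 (hbcov (subset_closure hx))
      have hyδ : δ ≤ volume (Dlim ∩ Metric.ball y (ε/2)) :=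
        Finset.inf_le (hbfin.mem_toFinset.2 hyb)
      have hnsub : ¬ (Dlim ∩ Metric.ball y (ε/2) ⊆ Dlim \ D i) := by
        intro hsubs
        have h1 : volume (Dlim ∩ Metric.ball y (ε/2)) ≤ volume (symmDiff (D i) Dlim) := by
          refine (measure_mono hsubs).trans (measure_mono ?_)
          rintro w ⟨hw1, hw2⟩
          rw [Set.mem_symmDiff]
          exact Or.inr ⟨hw1, hw2⟩
        exact lt_irrefl δ ((hyδ.trans h1).trans_lt (hN i hi))
      obtain ⟨w, hw, hwn⟩ := Set.not_subset.1 hnsub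
      have hwD : w ∈ D i := by
        by_contra hwD
        exact hwn ⟨hw.1, hwD⟩
      have h1 : Metric.infDist x (D i) ≤ dist x w := Metric.infDist_le_dist_of_mem hwD
      have h2 : dist x w < ε := by
        rw [Metric.mem_ball] at hxy
        have hw2 := hw.2
        rw [Metric.mem_ball] at hw2
        calc dist x w ≤ dist x y + dist y w := dist_triangle x y w
          _ = dist x y + dist w y := by rw [dist_comm y w]
          _ < ε/2 + ε/2 := by linarith
          _ = ε := by ring
      exact h1.trans_lt h2
    constructor
    · intro ε hε
      obtain ⟨N, hN⟩ := keyA ε hε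
      exact ⟨N, fun i hi x hx => hN i hi x hx⟩
    · rw [Metric.tendsto_atTop]
      intro ε hε
      obtain ⟨N₁, hN₁⟩ := keyA (ε/2) (by positivity)
      obtain ⟨N₂, hN₂⟩ := keyB (ε/2) (by positivity)
      refine ⟨max N₁ N₂ + 1, fun i hi => ?_⟩
      have hi₁ : i > N₁ := lt_of_le_of_lt (le_max_left _ _) (lt_of_lt_of_le (Nat.lt_succ_self _) hi)
      have hi₂ : i > N₂ := lt_of_le_of_lt (le_max_right _ _) (lt_of_lt_of_le (Nat.lt_succ_self _) hi)
      have hH : Metric.hausdorffDist (D i) Dlim ≤ ε/2 :=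
        Metric.hausdorffDist_le_of_infDist (by positivity)
          (fun x hx => (hN₁ i hi₁ x hx).le) (fun x hx => (hN₂ i hi₂ x hx).le)
      rw [Real.dist_eq, sub_zero, abs_of_nonneg Metric.hausdorffDist_nonneg]
      linarith
end

section
/- Let Ω ⊆ B_R ⊆ ℝⁿ be an M-uniform domain with diam(Ω) ≥ c₀ > 0. Then there exist δ = δ(M, n) ∈ (0, 1] and C = C(c₀, M, R, n) > 0 such that |(∂Ω)^r| ≤ C r^δ for all r ∈ (0, 1], where (∂Ω)^r = {x : dist(x, ∂Ω) < r}. -/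
open MeasureTheory Metric Set

lemma hole_lemma {n : ℕ} {M : ℝ} (hM : 1 < M) {Ω : Set (EuclideanSpace ℝ (Fin n))}
    (hΩ : IsMUniform M Ω) {x : EuclideanSpace ℝ (Fin n)} (hx : x ∈ frontier Ω)
    {s : ℝ} (hs : 0 < s) (hsd : s ≤ Metric.diam Ω) :
    ∃ y, ball y (s/(12*M)) ⊆ ball x (5*s/12) ∧
      ∀ z ∈ ball y (s/(12*M)), s/(12*M) ≤ infDist z (frontier Ω) := by
  have hM0 : (0:ℝ) < M := lt_trans one_pos hM
  -- find a far point x₂ in the closure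
  obtain ⟨a, ha, b, hb, hab⟩ : ∃ a ∈ Ω, ∃ b ∈ Ω, 2*s/3 < dist a b := by
    by_contra h
    push_neg at h
    have : Metric.diam Ω ≤ 2*s/3 := diam_le_of_forall_dist_le (by linarith) h
    linarith
  have hxc : x ∈ closure Ω := frontier_subset_closure hx
  obtain ⟨x₂, hx₂c, hx₂⟩ : ∃ x₂ ∈ closure Ω, s/3 ≤ dist x x₂ := by
    rcases le_or_gt (s/3) (dist x a) with h | h
    · exact ⟨a, subset_closure ha, h⟩
    · refine ⟨b, subset_closure hb, ?_⟩
      have := dist_triangle a x b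
      have hax : dist a x = dist x a := dist_comm a x
      linarith
  obtain ⟨γ, hγc, hγ0, hγ1, _, _, hγd⟩ := hΩ.2.2 x hxc x₂ hx₂c
  have hfc : ContinuousOn (fun t => dist (γ t) x) (Icc 0 1) := (continuous_id.dist continuous_const).comp_continuousOn hγc
  have hmem : s/6 ∈ Icc (dist (γ 0) x) (dist (γ 1) x) := by
    rw [hγ0, hγ1]
    constructor
    · simp; linarith
    · rw [dist_comm]; linarith
  obtain ⟨t, ht, hft⟩ := intermediate_value_Icc (zero_le_one) hfc hmem
  have h2 : s/6 ≤ dist (γ t) x₂ := by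
    have := dist_triangle x (γ t) x₂
    have h3 : dist x (γ t) = dist (γ t) x := dist_comm _ _
    linarith
  have hkey := hγd t ht
  have hft' : dist (γ t) x = s/6 := hft
  have hmin : min (dist (γ t) x) (dist (γ t) x₂) = s/6 := by
    rw [hft']; exact min_eq_left h2
  rw [hmin] at hkey
  have hinf : s/(6*M) ≤ infDist (γ t) (frontier Ω) := by
    have : (1/M) * (s/6) = s/(6*M) := by ring
    linarith [hkey]
  refine ⟨γ t, ?_, ?_⟩
  · intro z hz
    simp only [mem_ball] at hz ⊢
    have := dist_triangle z (γ t) x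
    have hM1 : s/(12*M) ≤ s/12 := by
      rw [div_le_div_iff₀ (by positivity) (by norm_num)]
      nlinarith
    linarith [hft']
  · intro z hz
    simp only [mem_ball] at hz
    have h4 : infDist (γ t) (frontier Ω) ≤ infDist z (frontier Ω) + dist (γ t) z := infDist_le_infDist_add_dist
    have h5 : dist (γ t) z = dist z (γ t) := dist_comm _ _
    have h6 : s/(6*M) = s/(12*M) + s/(12*M) := by ring
    linarith

lemma net_lemma {E : Type*} [MetricSpace E] {A K : Set E} (hK : IsCompact K) (hA : A ⊆ K)
    {s : ℝ} (hs : 0 < s) :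
    ∃ T : Finset E, ↑T ⊆ A ∧ ((T : Set E).Pairwise fun a b => s ≤ dist a b) ∧
      A ⊆ ⋃ z ∈ T, ball z s := by
  set S : Set (Set E) := {U | U ⊆ A ∧ U.Pairwise fun a b => s ≤ dist a b} with hS
  obtain ⟨m, -, hmax⟩ : ∃ m, ∅ ⊆ m ∧ Maximal (· ∈ S) m := by
    refine zorn_subset_nonempty S ?_ ∅ ⟨empty_subset _, pairwise_empty _⟩
    intro c hc hchain hcne
    refine ⟨⋃₀ c, ⟨?_, ?_⟩, fun u hu => subset_sUnion_of_mem hu⟩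
    · exact sUnion_subset fun u hu => (hc hu).1
    · intro u hu v hv huv
      obtain ⟨su, hsu, hu'⟩ := hu
      obtain ⟨sv, hsv, hv'⟩ := hv
      rcases hchain.total hsu hsv with h | h
      · exact (hc hsv).2 (h hu') hv' huv
      · exact (hc hsu).2 hu' (h hv') huv
  have hmS : m ∈ S := hmax.1
  -- m is finite
  have hmfin : m.Finite := by
    obtain ⟨t, htK, htfin, htcov⟩ := finite_cover_balls_of_compact hK (half_pos hs)
    have hsub : m ⊆ ⋃ x ∈ t, m ∩ ball x (s/2) := by
      intro z hz
      obtain ⟨_, ⟨x, rfl⟩, _, ⟨hxt, rfl⟩, hzx⟩ := htcov (hA (hmS.1 hz))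
      exact mem_biUnion hxt ⟨hz, hzx⟩
    refine Finite.subset (Finite.biUnion htfin fun x _ => ?_) hsub
    apply Set.Subsingleton.finite
    intro u hu v hv
    by_contra hne
    have h1 := hmS.2 hu.1 hv.1 hne
    have h2 := dist_triangle u x v
    rw [dist_comm x v] at h2
    simp only [mem_inter_iff, mem_ball] at hu hv
    linarith [hu.2, hv.2]
  refine ⟨hmfin.toFinset, by simpa using hmS.1, by simpa using hmS.2, ?_⟩
  intro z hz
  simp only [Finite.mem_toFinset, mem_iUnion, mem_ball, exists_prop]
  by_cases hzm : z ∈ m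
  · exact ⟨z, hzm, by simpa using hs⟩
  by_contra h
  push_neg at h
  have hins : insert z m ∈ S := by
    refine ⟨insert_subset hz hmS.1, ?_⟩
    haveI : Std.Symm (fun a b : E => s ≤ dist a b) := ⟨fun a b (hab : s ≤ dist a b) => by rwa [dist_comm]⟩
    rw [Set.pairwise_insert_of_symm]
    exact ⟨hmS.2, fun w hw _ => h w hw⟩
  have : insert z m ≤ m := hmax.2 hins (subset_insert z m)
  exact hzm (this (mem_insert z m))

lemma step_lemma {n : ℕ} (hn : 0 < n) {M : ℝ} (hM : 1 < M) {Ω : Set (EuclideanSpace ℝ (Fin n))}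
    (hΩ : IsMUniform M Ω) {R : ℝ} (hR : 0 < R) (hb : Ω ⊆ ball 0 R)
    {s : ℝ} (hs : 0 < s) (hs1 : s ≤ 1) (hsd : s ≤ Metric.diam Ω) :
    volume (thickening (s/(12*M)) (frontier Ω)) ≤
      ENNReal.ofReal (1/(1+(1/(12*M))^n)) * volume (thickening s (frontier Ω)) := by
  classical
  haveI : Nontrivial (EuclideanSpace ℝ (Fin n)) :=
    Module.nontrivial_of_finrank_pos (R := ℝ) (by rw [finrank_euclideanSpace_fin]; omega)
  have hM0 : (0:ℝ) < M := lt_trans one_pos hM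
  set F := frontier Ω with hF
  set c : ℝ := s/(12*M) with hc
  have hc0 : 0 < c := by positivity
  have hcs : c < s/12 := by
    rw [hc, div_lt_div_iff₀ (by positivity) (by norm_num)]
    nlinarith
  have hFK : F ⊆ closedBall (0:EuclideanSpace ℝ (Fin n)) R := by
    refine subset_trans frontier_subset_closure ?_
    exact closure_minimal (hb.trans ball_subset_closedBall) Metric.isClosed_closedBall
  set A := thickening c F with hA
  have hAK : A ⊆ closedBall (0:EuclideanSpace ℝ (Fin n)) (R+1) := by
    intro z hz
    obtain ⟨w, hw, hzw⟩ := mem_thickening_iff.1 hz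
    have hwR : dist w 0 ≤ R := mem_closedBall.1 (hFK hw)
    rw [mem_closedBall]
    have h2 : dist z 0 ≤ dist z w + dist w 0 := dist_triangle z w 0
    have h3 : c ≤ 1/12 := by
      rw [hc, div_le_div_iff₀ (by positivity) (by norm_num)]; nlinarith
    linarith
  obtain ⟨T, hTA, hTsep, hTcov⟩ := net_lemma (isCompact_closedBall (0:EuclideanSpace ℝ (Fin n)) (R+1)) hAK hs
  -- holes
  have hhole : ∀ z ∈ T, ∃ y, ball y c ⊆ ball z (s/2) ∧ ball y c ⊆ thickening s F ∧
      ∀ w ∈ ball y c, c ≤ infDist w F := by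
    intro z hz
    obtain ⟨x, hxF, hzx⟩ := mem_thickening_iff.1 (hTA hz)
    obtain ⟨y, hy1, hy2⟩ := hole_lemma hM hΩ hxF hs hsd
    refine ⟨y, ?_, ?_, hy2⟩
    · intro w hw
      have := hy1 hw
      rw [mem_ball] at this ⊢
      have h2 := dist_triangle w x z
      rw [dist_comm x z] at h2
      linarith
    · intro w hw
      have := hy1 hw
      rw [mem_ball] at this
      refine mem_thickening_iff.2 ⟨x, hxF, ?_⟩
      linarith
  choose! y hy1 hy2 hy3 using hhole
  set f : EuclideanSpace ℝ (Fin n) → Set (EuclideanSpace ℝ (Fin n)) := fun z => ball (y z) c with hf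
  have hdisj : (T : Set (EuclideanSpace ℝ (Fin n))).PairwiseDisjoint f := by
    intro u hu v hv huv
    refine Disjoint.mono (hy1 u hu) (hy1 v hv) (ball_disjoint_ball ?_)
    have := hTsep hu hv huv
    linarith
  have hfmeas : ∀ z ∈ T, MeasurableSet (f z) := fun z _ => measurableSet_ball
  -- measure of balls
  set B1 := volume (ball (0:EuclideanSpace ℝ (Fin n)) 1) with hB1
  have hballvol : ∀ (x : EuclideanSpace ℝ (Fin n)) (r : ℝ), 0 ≤ r →
      volume (ball x r) = ENNReal.ofReal (r^n) * B1 := by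
    intro x r hr
    rw [hB1, Measure.addHaar_ball volume x hr, finrank_euclideanSpace_fin]
  -- upper bound on μ A
  have hAle : volume A ≤ T.card * (ENNReal.ofReal (s^n) * B1) := by
    calc volume A ≤ ∑ z ∈ T, volume (ball z s) := le_trans (measure_mono hTcov)
          (measure_biUnion_finset_le T _)
      _ = T.card * (ENNReal.ofReal (s^n) * B1) := by
          rw [Finset.sum_congr rfl fun z _ => hballvol z s hs.le]
          simp [Finset.sum_const, nsmul_eq_mul]
  -- measure of holes
  have hholesvol : volume (⋃ z ∈ T, f z) = T.card * (ENNReal.ofReal (c^n) * B1) := by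
    rw [measure_biUnion_finset hdisj hfmeas,
      Finset.sum_congr rfl fun z _ => hballvol (y z) c hc0.le]
    simp [Finset.sum_const, nsmul_eq_mul]
  set κ : ℝ := (1/(12*M))^n with hκ
  have hκ0 : 0 < κ := by positivity
  have hcκ : ENNReal.ofReal (c^n) = ENNReal.ofReal κ * ENNReal.ofReal (s^n) := by
    rw [← ENNReal.ofReal_mul (by positivity)]
    congr 1
    rw [hc, hκ]
    rw [div_eq_mul_one_div s (12*M), mul_comm s (1/(12*M)), mul_pow]
  have hholes_ge : ENNReal.ofReal κ * volume A ≤ volume (⋃ z ∈ T, f z) := by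
    rw [hholesvol, hcκ]
    calc ENNReal.ofReal κ * volume A ≤ ENNReal.ofReal κ * (T.card * (ENNReal.ofReal (s^n) * B1)) :=
          mul_le_mul_right hAle _
      _ = T.card * (ENNReal.ofReal κ * ENNReal.ofReal (s^n) * B1) := by ring
  -- disjointness of A and holes
  have hdisjA : Disjoint A (⋃ z ∈ T, f z) := by
    rw [Set.disjoint_right]
    intro w hw
    simp only [mem_iUnion, exists_prop] at hw
    obtain ⟨z, hz, hwz⟩ := hw
    intro hwA
    obtain ⟨u, hu, hwu⟩ := mem_thickening_iff.1 hwA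
    have := infDist_le_dist_of_mem (x := w) hu
    have := hy3 z hz w hwz
    linarith
  have hsub : A ∪ (⋃ z ∈ T, f z) ⊆ thickening s F := by
    refine union_subset (thickening_mono ?_ F) ?_
    · rw [hc]; linarith
    · exact iUnion₂_subset fun z hz => hy2 z hz
  have hmeasholes : MeasurableSet (⋃ z ∈ T, f z) := T.measurableSet_biUnion hfmeas
  have hkey : (1 + ENNReal.ofReal κ) * volume A ≤ volume (thickening s F) := by
    calc (1 + ENNReal.ofReal κ) * volume A = volume A + ENNReal.ofReal κ * volume A := by ring
      _ ≤ volume A + volume (⋃ z ∈ T, f z) := add_le_add_right hholes_ge _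
      _ = volume (A ∪ ⋃ z ∈ T, f z) := (measure_union hdisjA hmeasholes).symm
      _ ≤ volume (thickening s F) := measure_mono hsub
  -- conclude
  have hfac : ENNReal.ofReal (1/(1+κ)) * (1 + ENNReal.ofReal κ) = 1 := by
    rw [show (1:ENNReal) + ENNReal.ofReal κ = ENNReal.ofReal (1+κ) by
        rw [ENNReal.ofReal_add zero_le_one hκ0.le, ENNReal.ofReal_one],
      ← ENNReal.ofReal_mul (by positivity)]
    rw [show (1/(1+κ)) * (1+κ) = 1 by field_simp]
    exact ENNReal.ofReal_one
  calc volume A = ENNReal.ofReal (1/(1+κ)) * ((1 + ENNReal.ofReal κ) * volume A) := by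
        rw [← mul_assoc, hfac, one_mul]
    _ ≤ ENNReal.ofReal (1/(1+κ)) * volume (thickening s F) := mul_le_mul_right hkey _

theorem volume_boundary_neighborhood_MUniform (n : ℕ) (M : ℝ) (hM : 1 < M) :
    ∃ δ : ℝ, δ ∈ Set.Ioc (0:ℝ) 1 ∧ ∀ c₀ R : ℝ, 0 < c₀ → 0 < R →
      ∃ C : ℝ, 0 < C ∧ ∀ Ω : Set (EuclideanSpace ℝ (Fin n)),
        IsMUniform M Ω → Ω ⊆ Metric.ball 0 R → c₀ ≤ Metric.diam Ω →
        ∀ r ∈ Set.Ioc (0:ℝ) 1,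
          volume (Metric.thickening r (frontier Ω)) ≤ ENNReal.ofReal (C * r ^ δ) := by
  have hM0 : (0:ℝ) < M := lt_trans one_pos hM
  set c : ℝ := 1/(12*M) with hcdef
  have hc0 : 0 < c := by positivity
  have hc1 : c < 1 := by
    rw [hcdef, div_lt_one (by positivity)]; nlinarith
  set κ : ℝ := c^n with hκdef
  have hκ0 : 0 < κ := by positivity
  set θ : ℝ := 1/(1+κ) with hθdef
  have hθ0 : 0 < θ := by positivity
  have hθ1 : θ < 1 := by
    rw [hθdef, div_lt_one (by positivity)]; linarith
  set δ₀ : ℝ := Real.log θ / Real.log c with hδ₀def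
  have hδ₀0 : 0 < δ₀ := div_pos_of_neg_of_neg (Real.log_neg hθ0 hθ1) (Real.log_neg hc0 hc1)
  have hθc : θ = c ^ δ₀ := by
    rw [Real.rpow_def_of_pos hc0, hδ₀def]
    rw [mul_div_cancel₀ _ (ne_of_lt (Real.log_neg hc0 hc1))]
    rw [Real.exp_log hθ0]
  set δ : ℝ := min 1 δ₀ with hδdef
  have hδ0 : 0 < δ := lt_min one_pos hδ₀0
  have hδ1 : δ ≤ 1 := min_le_left _ _
  refine ⟨δ, ⟨hδ0, hδ1⟩, ?_⟩
  intro c₀ R hc₀ hR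
  set s₀ : ℝ := min c₀ 1 with hs₀def
  have hs₀0 : 0 < s₀ := lt_min hc₀ one_pos
  have hs₀1 : s₀ ≤ 1 := min_le_right _ _
  set V : ENNReal := volume (ball (0:EuclideanSpace ℝ (Fin n)) (R+2)) with hVdef
  have hVfin : V ≠ ⊤ := (measure_ball_lt_top).ne
  set VR : ℝ := V.toReal with hVRdef
  have hVR0 : 0 ≤ VR := ENNReal.toReal_nonneg
  have hVeq : V = ENNReal.ofReal VR := (ENNReal.ofReal_toReal hVfin).symm
  set K₁ : ℝ := ((s₀*c)⁻¹) ^ δ₀ with hK₁def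
  have hK₁0 : 0 < K₁ := Real.rpow_pos_of_pos (by positivity) _
  set C : ℝ := (VR + 1) * (K₁ + s₀⁻¹) with hCdef
  have hC0 : 0 < C := by positivity
  refine ⟨C, hC0, ?_⟩
  intro Ω hΩ hb hdiam r hr
  obtain ⟨hr0, hr1⟩ := hr
  by_cases hFe : frontier Ω = ∅
  · rw [hFe, thickening_empty, measure_empty]
    exact zero_le
  -- n is positive
  have hn : 0 < n := by
    rcases Nat.eq_zero_or_pos n with h | h
    · exfalso
      subst h
      have : Metric.diam Ω = 0 := diam_subsingleton subsingleton_of_subsingleton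
      rw [this] at hdiam
      linarith
    · exact h
  -- containment of thickenings
  have hcont : ∀ s : ℝ, s ≤ 1 → thickening s (frontier Ω) ⊆
      ball (0:EuclideanSpace ℝ (Fin n)) (R+2) := by
    intro s hs z hz
    obtain ⟨w, hw, hzw⟩ := mem_thickening_iff.1 hz
    have hwR : dist w 0 ≤ R := by
      have h1 : w ∈ closedBall (0:EuclideanSpace ℝ (Fin n)) R :=
        closure_minimal (hb.trans ball_subset_closedBall) Metric.isClosed_closedBall
          (frontier_subset_closure hw)
      exact mem_closedBall.1 h1
    rw [mem_ball]
    have h2 : dist z 0 ≤ dist z w + dist w 0 := dist_triangle z w 0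
    have hzw1 : dist z w < 1 := lt_of_lt_of_le hzw hs
    linarith
  -- iteration
  have hiter : ∀ k : ℕ, volume (thickening (s₀ * c^k) (frontier Ω)) ≤
      ENNReal.ofReal (θ^k) * V := by
    intro k
    induction k with
    | zero =>
      simp only [pow_zero, mul_one, ENNReal.ofReal_one, one_mul]
      exact measure_mono (hcont s₀ hs₀1)
    | succ k ih =>
      have hs' : 0 < s₀ * c^k := by positivity
      have hs'1 : s₀ * c^k ≤ 1 := by
        calc s₀ * c^k ≤ 1 * 1 := by
              apply mul_le_mul hs₀1 (pow_le_one₀ hc0.le hc1.le) (by positivity) one_pos.le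
          _ = 1 := mul_one 1
      have hs'd : s₀ * c^k ≤ Metric.diam Ω := by
        calc s₀ * c^k ≤ s₀ * 1 := by
              apply mul_le_mul_of_nonneg_left (pow_le_one₀ hc0.le hc1.le) hs₀0.le
          _ = s₀ := mul_one _
          _ ≤ c₀ := min_le_left _ _
          _ ≤ _ := hdiam
      have heq : s₀ * c^(k+1) = (s₀ * c^k)/(12*M) := by
        rw [pow_succ, hcdef]; field_simp
      have hstep := step_lemma hn hM hΩ hR hb hs' hs'1 hs'd
      rw [← heq] at hstep
      calc volume (thickening (s₀ * c^(k+1)) (frontier Ω))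
          ≤ ENNReal.ofReal θ * volume (thickening (s₀ * c^k) (frontier Ω)) := hstep
        _ ≤ ENNReal.ofReal θ * (ENNReal.ofReal (θ^k) * V) := mul_le_mul_right ih _
        _ = ENNReal.ofReal (θ^(k+1)) * V := by
            rw [← mul_assoc, ← ENNReal.ofReal_mul hθ0.le, ← pow_succ']
  rcases le_or_gt r s₀ with hrs | hrs
  · -- find k
    have hex : ∃ k : ℕ, s₀ * c^k < r := by
      obtain ⟨k, hk⟩ := exists_pow_lt_of_lt_one (div_pos hr0 hs₀0) hc1
      exact ⟨k, by rwa [← lt_div_iff₀' hs₀0]⟩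
    have hk₀ : s₀ * c^(Nat.find hex) < r := Nat.find_spec hex
    have hk₀ne : Nat.find hex ≠ 0 := by
      intro h
      rw [h, pow_zero, mul_one] at hk₀
      linarith
    obtain ⟨k, hkeq⟩ := Nat.exists_eq_succ_of_ne_zero hk₀ne
    rw [hkeq] at hk₀
    have hklow : r ≤ s₀ * c^k := by
      by_contra h
      push_neg at h
      exact Nat.find_min hex (by omega) h
    -- real bound
    have hck : c^k ≤ r / (s₀ * c) := by
      rw [le_div_iff₀ (by positivity)]
      calc c^k * (s₀ * c) = s₀ * c^(k+1) := by ring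
        _ ≤ r := hk₀.le
    have hreal : θ^k ≤ K₁ * r ^ δ := by
      have h1 : θ^k = (c^k) ^ δ₀ := by
        rw [hθc, ← Real.rpow_natCast (c ^ δ₀) k, ← Real.rpow_mul hc0.le,
          mul_comm, Real.rpow_mul hc0.le, Real.rpow_natCast]
      have h2 : (c^k : ℝ) ^ δ₀ ≤ (r / (s₀ * c)) ^ δ₀ :=
        Real.rpow_le_rpow (by positivity) hck hδ₀0.le
      have h3 : (r / (s₀ * c)) ^ δ₀ = r ^ δ₀ * K₁ := by
        rw [hK₁def, div_eq_mul_inv, Real.mul_rpow hr0.le (by positivity)]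
      have h4 : r ^ δ₀ ≤ r ^ δ :=
        Real.rpow_le_rpow_of_exponent_ge hr0 hr1 (min_le_right 1 δ₀)
      calc θ^k = (c^k) ^ δ₀ := h1
        _ ≤ (r / (s₀ * c)) ^ δ₀ := h2
        _ = r ^ δ₀ * K₁ := h3
        _ ≤ r ^ δ * K₁ := mul_le_mul_of_nonneg_right h4 hK₁0.le
        _ = K₁ * r ^ δ := mul_comm _ _
    calc volume (thickening r (frontier Ω))
        ≤ volume (thickening (s₀ * c^k) (frontier Ω)) :=
          measure_mono (thickening_mono hklow _)
      _ ≤ ENNReal.ofReal (θ^k) * V := hiter k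
      _ = ENNReal.ofReal (θ^k * VR) := by
          rw [hVeq, ← ENNReal.ofReal_mul (by positivity)]
      _ ≤ ENNReal.ofReal (C * r ^ δ) := by
          apply ENNReal.ofReal_le_ofReal
          have hrδ : (0:ℝ) ≤ r ^ δ := Real.rpow_nonneg hr0.le _
          have := mul_le_mul_of_nonneg_right hreal hVR0
          calc θ^k * VR ≤ K₁ * r ^ δ * VR := this
            _ ≤ C * r ^ δ := by
                rw [hCdef]
                have hs₀inv : (0:ℝ) ≤ s₀⁻¹ := by positivity
                have hcoef : K₁ * VR ≤ (VR + 1) * (K₁ + s₀⁻¹) := by nlinarith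
                calc K₁ * r ^ δ * VR = (K₁ * VR) * r ^ δ := by ring
                  _ ≤ ((VR + 1) * (K₁ + s₀⁻¹)) * r ^ δ :=
                      mul_le_mul_of_nonneg_right hcoef hrδ
  · -- large r
    have hrδ : s₀ ≤ r ^ δ := by
      have h1 : s₀ ^ (1:ℝ) ≤ s₀ ^ δ := Real.rpow_le_rpow_of_exponent_ge hs₀0 hs₀1 hδ1
      rw [Real.rpow_one] at h1
      have h2 : s₀ ^ δ ≤ r ^ δ := Real.rpow_le_rpow hs₀0.le hrs.le hδ0.le
      linarith
    calc volume (thickening r (frontier Ω))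
        ≤ V := measure_mono (hcont r hr1)
      _ = ENNReal.ofReal VR := hVeq
      _ ≤ ENNReal.ofReal (C * r ^ δ) := by
          apply ENNReal.ofReal_le_ofReal
          have : (VR + 1) * s₀⁻¹ * s₀ ≤ (VR + 1) * s₀⁻¹ * r ^ δ := by
            apply mul_le_mul_of_nonneg_left hrδ (by positivity)
          rw [mul_assoc, inv_mul_cancel₀ hs₀0.ne', mul_one] at this
          have hle : (VR + 1) * s₀⁻¹ * r ^ δ ≤ C * r ^ δ := by
            apply mul_le_mul_of_nonneg_right _ (Real.rpow_nonneg (le_of_lt hr0) _)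
            rw [hCdef]
            nlinarith [hK₁0.le, hVR0]
          linarith
end

section
/- Let Ω ⊆ B_R ⊆ ℝⁿ be a measurable set such that |(∂Ω)^r| ≤ C r^δ for all r ∈ (0, 2R], for some δ ∈ (0, 1] and C > 0. Then for every s ∈ (0, δ), the fractional Sobolev seminorm satisfies [χ_Ω]_{W^{s,1}(B_R)} = ∫_{B_R}∫_{B_R} |χ_Ω(x) − χ_Ω(y)| / |x−y|^{n+s} dy dx ≤ C', with C' depending only on C, n, R, s, δ. -/
open MeasureTheory Metric Set
open scoped ENNReal

lemma crossing_segment {E : Type*} [NormedAddCommGroup E] [NormedSpace ℝ E]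
    {Ω : Set E} {x y : E} (hx : x ∈ Ω) (hy : y ∉ Ω) :
    ∃ z ∈ frontier Ω, z ∈ segment ℝ x y := by
  by_contra h
  push_neg at h
  have hsub : segment ℝ x y ⊆ interior Ω ∪ (closure Ω)ᶜ := by
    intro z hz
    rcases em (z ∈ closure Ω) with hc | hc
    · left
      by_contra hi
      exact h z ⟨hc, hi⟩ hz
    · exact Or.inr hc
  have hdisj : Disjoint (interior Ω) (closure Ω)ᶜ :=
    disjoint_compl_right.mono_left (interior_subset.trans subset_closure)
  rcases (convex_segment x y).isPreconnected.subset_or_subset isOpen_interior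
      isClosed_closure.isOpen_compl hdisj hsub with hsu | hsu
  · exact hy (interior_subset (hsu (right_mem_segment ℝ x y)))
  · exact (hsu (left_mem_segment ℝ x y)) (subset_closure hx)

lemma indicator_ne_mem_thickening {E : Type*} [NormedAddCommGroup E] [NormedSpace ℝ E]
    {Ω : Set E} {x y : E} {r : ℝ}
    (hne : Ω.indicator (fun _ => (1:ℝ)) x ≠ Ω.indicator (fun _ => (1:ℝ)) y)
    (hr : dist x y < r) : x ∈ Metric.thickening r (frontier Ω) := by
  have key : ∃ z ∈ frontier Ω, dist x z ≤ dist x y := by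
    rcases em (x ∈ Ω) with hx | hx <;> rcases em (y ∈ Ω) with hy | hy
    · simp [hx, hy] at hne
    · obtain ⟨z, hz, hzs⟩ := crossing_segment hx hy
      have := dist_add_dist_of_mem_segment hzs
      exact ⟨z, hz, by linarith [dist_nonneg (x := z) (y := y)]⟩
    · obtain ⟨z, hz, hzs⟩ := crossing_segment hy hx
      rw [segment_symm] at hzs
      have := dist_add_dist_of_mem_segment hzs
      exact ⟨z, hz, by linarith [dist_nonneg (x := z) (y := y)]⟩
    · simp [hx, hy] at hne
  obtain ⟨z, hz, hzd⟩ := key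
  exact Metric.mem_thickening_iff.mpr ⟨z, hz, lt_of_le_of_lt hzd hr⟩

lemma aux_arith {R C δ s : ℝ} (n : ℕ) (hR : 0 < R) (k : ℕ) :
    (R * (1/2:ℝ)^k) ^ (-((n:ℝ)+s)) * ((2*R*(1/2:ℝ)^k) ^ n) * (C * (2*R*(1/2:ℝ)^k) ^ δ)
      = (C * (2:ℝ) ^ ((n:ℝ)+δ) * R ^ (δ-s)) * (((1/2:ℝ) ^ (δ-s)) ^ k) := by
  have ht : (0:ℝ) < (1/2:ℝ)^k := by positivity
  have hX : (0:ℝ) < R * (1/2:ℝ)^k := by positivity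
  set t : ℝ := (1/2:ℝ)^k with ht_def
  have h2X : 2*R*t = 2*(R*t) := by ring
  rw [h2X]
  rw [show ((2*(R*t)) ^ n : ℝ) = (2*(R*t)) ^ (n:ℝ) by rw [Real.rpow_natCast]]
  rw [Real.mul_rpow (by norm_num) hX.le, Real.mul_rpow (by norm_num) hX.le]
  have hfold : (R*t) ^ (-((n:ℝ)+s)) * (R*t) ^ (n:ℝ) * (R*t) ^ δ = (R*t) ^ (δ - s) := by
    rw [← Real.rpow_add hX, ← Real.rpow_add hX]
    ring_nf
  have htq : t ^ (δ - s) = ((1/2:ℝ) ^ (δ-s)) ^ k := by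
    rw [ht_def, ← Real.rpow_natCast ((1/2:ℝ)) k, ← Real.rpow_natCast ((1/2:ℝ) ^ (δ-s)) k,
      ← Real.rpow_mul (by norm_num), ← Real.rpow_mul (by norm_num), mul_comm]
  calc (R*t) ^ (-((n:ℝ)+s)) * ((2:ℝ) ^ (n:ℝ) * (R*t) ^ (n:ℝ)) *
        (C * ((2:ℝ) ^ δ * (R*t) ^ δ))
      = C * ((2:ℝ) ^ (n:ℝ) * (2:ℝ) ^ δ) *
          ((R*t) ^ (-((n:ℝ)+s)) * (R*t) ^ (n:ℝ) * (R*t) ^ δ) := by ring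
    _ = C * (2:ℝ) ^ ((n:ℝ)+δ) * (R*t) ^ (δ - s) := by
        rw [← Real.rpow_add (by norm_num : (0:ℝ) < 2), hfold]
    _ = (C * (2:ℝ) ^ ((n:ℝ)+δ) * R ^ (δ-s)) * (((1/2:ℝ) ^ (δ-s)) ^ k) := by
        rw [Real.mul_rpow hR.le ht.le, htq]; ring

theorem fractional_seminorm_bound (n : ℕ) (R C δ s : ℝ) (hR : 0 < R) (hC : 0 < C)
    (hδ : δ ∈ Set.Ioc (0:ℝ) 1) (hs : s ∈ Set.Ioo (0:ℝ) δ) :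
    ∃ C' : ℝ, 0 < C' ∧ ∀ Ω : Set (EuclideanSpace ℝ (Fin n)),
      Ω ⊆ Metric.ball 0 R →
      (∀ r ∈ Set.Ioc (0:ℝ) (2 * R),
        volume (Metric.thickening r (frontier Ω)) ≤ ENNReal.ofReal (C * r ^ δ)) →
      (∫⁻ x in Metric.ball (0 : EuclideanSpace ℝ (Fin n)) R,
        ∫⁻ y in Metric.ball (0 : EuclideanSpace ℝ (Fin n)) R,
          ENNReal.ofReal
            (|Set.indicator Ω (fun _ => (1:ℝ)) x - Set.indicator Ω (fun _ => (1:ℝ)) y| /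
              dist x y ^ ((n : ℝ) + s)))
        ≤ ENNReal.ofReal C' := by
  classical
  obtain ⟨hδ0, hδ1⟩ := hδ
  obtain ⟨hs0, hsδ⟩ := hs
  set q : ℝ := (1/2:ℝ) ^ (δ - s) with hq_def
  have hq0 : 0 ≤ q := Real.rpow_nonneg (by norm_num) _
  have hq1 : q < 1 := Real.rpow_lt_one (by norm_num) (by norm_num) (by linarith)
  set A : ℝ := C * (2:ℝ) ^ ((n:ℝ) + δ) * R ^ (δ - s) with hA_def
  have hA0 : 0 ≤ A := by positivity
  set ω : ℝ≥0∞ := volume (Metric.closedBall (0 : EuclideanSpace ℝ (Fin n)) 1) with hω_def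
  have hω_top : ω ≠ ⊤ := measure_closedBall_lt_top.ne
  set B : ℝ≥0∞ := ω * (ENNReal.ofReal A * (1 - ENNReal.ofReal q)⁻¹) with hB_def
  have hq1' : ENNReal.ofReal q < 1 := ENNReal.ofReal_lt_one.mpr hq1
  have hB_top : B ≠ ⊤ := by
    apply ENNReal.mul_ne_top hω_top
    apply ENNReal.mul_ne_top ENNReal.ofReal_ne_top
    rw [Ne, ENNReal.inv_eq_top, tsub_eq_zero_iff_le]
    exact not_le.mpr hq1'
  refine ⟨B.toReal + 1, by positivity, ?_⟩
  intro Ω hΩR hvol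
  set T := Metric.ball (0 : EuclideanSpace ℝ (Fin n)) R with hT_def
  set r : ℕ → ℝ := fun k => 2 * R * (1/2:ℝ)^k with hr_def
  have hrpos : ∀ k, 0 < r k := fun k => by simp only [hr_def]; positivity
  have hrsucc : ∀ k, r (k+1) = R * (1/2:ℝ)^k := fun k => by
    simp only [hr_def, pow_succ]; ring
  have hrle : ∀ k, r k ≤ 2*R := fun k => by
    simp only [hr_def]
    nlinarith [pow_le_one₀ (by norm_num : (0:ℝ) ≤ 1/2) (by norm_num : (1/2:ℝ) ≤ 1) (n := k)]
  set g : ℕ → EuclideanSpace ℝ (Fin n) → EuclideanSpace ℝ (Fin n) → ℝ≥0∞ := fun k x y =>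
    (Metric.thickening (r k) (frontier Ω)).indicator (fun _ => (1:ℝ≥0∞)) x *
      {y' | r (k+1) ≤ dist x y' ∧ dist x y' < r k}.indicator
        (fun _ => ENNReal.ofReal ((r (k+1)) ^ (-((n:ℝ)+s)))) y with hg_def
  set c : ℕ → ℝ≥0∞ := fun k =>
    ENNReal.ofReal ((r (k+1)) ^ (-((n:ℝ)+s))) * (ENNReal.ofReal ((r k)^n) * ω) with hc_def
  -- Step 1: pointwise bound
  have step1 : ∀ x ∈ T, ∀ y ∈ T,
      ENNReal.ofReal
        (|Set.indicator Ω (fun _ => (1:ℝ)) x - Set.indicator Ω (fun _ => (1:ℝ)) y| /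
          dist x y ^ ((n : ℝ) + s)) ≤ ∑' k, g k x y := by
    intro x hx y hy
    by_cases hne : Set.indicator Ω (fun _ => (1:ℝ)) x = Set.indicator Ω (fun _ => (1:ℝ)) y
    · simp [hne]
    · have hxy : x ≠ y := fun h => hne (by rw [h])
      have hd0 : 0 < dist x y := dist_pos.mpr hxy
      have hd2R : dist x y < 2 * R := by
        have h1 : dist x 0 < R := mem_ball.mp hx
        have h2 : dist y 0 < R := mem_ball.mp hy
        calc dist x y ≤ dist x 0 + dist 0 y := dist_triangle _ _ _
          _ < 2*R := by rw [dist_comm (0 : EuclideanSpace ℝ (Fin n)) y]; linarith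
      have hex : ∃ m, r m ≤ dist x y := by
        obtain ⟨m, hm⟩ := exists_pow_lt_of_lt_one
          (show (0:ℝ) < dist x y / (2*R) by positivity) (by norm_num : (1/2:ℝ) < 1)
        refine ⟨m, ?_⟩
        simp only [hr_def]
        rw [lt_div_iff₀ (by positivity : (0:ℝ) < 2*R)] at hm
        nlinarith
      have hm := Nat.find_spec hex
      have hm0 : Nat.find hex ≠ 0 := by
        intro h
        rw [h] at hm
        simp only [hr_def, pow_zero, mul_one] at hm
        linarith
      obtain ⟨k, hk⟩ := Nat.exists_eq_succ_of_ne_zero hm0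
      have hlow : r (k+1) ≤ dist x y := by rw [hk] at hm; exact hm
      have hhigh : dist x y < r k := lt_of_not_ge (Nat.find_min hex (by omega))
      have hthick : x ∈ Metric.thickening (r k) (frontier Ω) :=
        indicator_ne_mem_thickening hne hhigh
      have habs : |Set.indicator Ω (fun _ => (1:ℝ)) x - Set.indicator Ω (fun _ => (1:ℝ)) y|
          = 1 := by
        rcases em (x ∈ Ω) with hxm|hxm <;> rcases em (y ∈ Ω) with hym|hym <;>
          simp [hxm, hym] at hne ⊢
      refine le_trans ?_ (ENNReal.le_tsum k)
      simp only [hg_def, Set.indicator_of_mem hthick,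
        Set.indicator_of_mem (show y ∈ {y' | r (k+1) ≤ dist x y' ∧ dist x y' < r k}
          from ⟨hlow, hhigh⟩), one_mul, habs]
      apply ENNReal.ofReal_le_ofReal
      rw [one_div, ← Real.rpow_neg hd0.le]
      exact Real.rpow_le_rpow_of_nonpos (hrpos (k+1)) hlow
        (by have : (0:ℝ) ≤ (n:ℝ) := Nat.cast_nonneg n; linarith)
  -- measurability of annulus
  have hann_meas : ∀ (x : EuclideanSpace ℝ (Fin n)) (k : ℕ),
      MeasurableSet {y' : EuclideanSpace ℝ (Fin n) | r (k+1) ≤ dist x y' ∧ dist x y' < r k} := by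
    intro x k
    have h1 : Measurable fun y' : EuclideanSpace ℝ (Fin n) => dist x y' :=
      (continuous_const.dist continuous_id).measurable
    exact (h1 measurableSet_Ico : MeasurableSet ((fun y' => dist x y') ⁻¹' (Set.Ico (r (k+1)) (r k))))
  -- Step 2: inner integral of g k
  have step2 : ∀ (x : EuclideanSpace ℝ (Fin n)) (k : ℕ), ∫⁻ y in T, g k x y ≤
      (Metric.thickening (r k) (frontier Ω)).indicator (fun _ => (1:ℝ≥0∞)) x * c k := by
    intro x k
    have hind_ne_top : (Metric.thickening (r k) (frontier Ω)).indicator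
        (fun _ => (1:ℝ≥0∞)) x ≠ ⊤ := by
      by_cases h : x ∈ Metric.thickening (r k) (frontier Ω) <;> simp [h]
    rw [show (fun y => g k x y) = fun y =>
        (Metric.thickening (r k) (frontier Ω)).indicator (fun _ => (1:ℝ≥0∞)) x *
          {y' | r (k+1) ≤ dist x y' ∧ dist x y' < r k}.indicator
            (fun _ => ENNReal.ofReal ((r (k+1)) ^ (-((n:ℝ)+s)))) y from rfl,
      lintegral_const_mul' _ _ hind_ne_top]
    apply mul_le_mul_right
    rw [lintegral_indicator_const (hann_meas x k)]
    have hsub : {y' : EuclideanSpace ℝ (Fin n) | r (k+1) ≤ dist x y' ∧ dist x y' < r k} ⊆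
        Metric.closedBall x (r k) := fun y' hy' => by
      rw [Metric.mem_closedBall, dist_comm]; exact hy'.2.le
    calc ENNReal.ofReal ((r (k+1)) ^ (-((n:ℝ)+s))) *
          (volume.restrict T) {y' | r (k+1) ≤ dist x y' ∧ dist x y' < r k}
        ≤ ENNReal.ofReal ((r (k+1)) ^ (-((n:ℝ)+s))) * volume (Metric.closedBall x (r k)) := by
          apply mul_le_mul_right
          exact le_trans (Measure.restrict_le_self _) (measure_mono hsub)
      _ = c k := by
          rw [Measure.addHaar_closedBall' volume x (hrpos k).le, hc_def]
          simp [finrank_euclideanSpace_fin, hω_def]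
  -- Step 3
  have step3 : ∀ x ∈ T, (∫⁻ y in T,
      ENNReal.ofReal
        (|Set.indicator Ω (fun _ => (1:ℝ)) x - Set.indicator Ω (fun _ => (1:ℝ)) y| /
          dist x y ^ ((n : ℝ) + s))) ≤
      ∑' k, (Metric.thickening (r k) (frontier Ω)).indicator (fun _ => (1:ℝ≥0∞)) x * c k := by
    intro x hx
    calc (∫⁻ y in T, ENNReal.ofReal
          (|Set.indicator Ω (fun _ => (1:ℝ)) x - Set.indicator Ω (fun _ => (1:ℝ)) y| /
            dist x y ^ ((n : ℝ) + s)))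
        ≤ ∫⁻ y in T, ∑' k, g k x y :=
          setLIntegral_mono' measurableSet_ball (step1 x hx)
      _ = ∑' k, ∫⁻ y in T, g k x y := by
          apply lintegral_tsum
          intro k
          exact (measurable_const.mul
            (Measurable.indicator measurable_const (hann_meas x k))).aemeasurable
      _ ≤ ∑' k, (Metric.thickening (r k) (frontier Ω)).indicator (fun _ => (1:ℝ≥0∞)) x * c k :=
          ENNReal.tsum_le_tsum (fun k => step2 x k)
  -- Step 4
  have hthick_meas : ∀ k, MeasurableSet (Metric.thickening (r k) (frontier Ω)) :=
    fun k => (Metric.isOpen_thickening).measurableSet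
  have step4 : (∫⁻ x in T, ∫⁻ y in T,
      ENNReal.ofReal
        (|Set.indicator Ω (fun _ => (1:ℝ)) x - Set.indicator Ω (fun _ => (1:ℝ)) y| /
          dist x y ^ ((n : ℝ) + s))) ≤
      ∑' k, ENNReal.ofReal (C * (r k)^δ) * c k := by
    calc (∫⁻ x in T, ∫⁻ y in T, ENNReal.ofReal
          (|Set.indicator Ω (fun _ => (1:ℝ)) x - Set.indicator Ω (fun _ => (1:ℝ)) y| /
            dist x y ^ ((n : ℝ) + s)))
        ≤ ∫⁻ x in T, ∑' k,
            (Metric.thickening (r k) (frontier Ω)).indicator (fun _ => (1:ℝ≥0∞)) x * c k :=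
          setLIntegral_mono' measurableSet_ball step3
      _ = ∑' k, ∫⁻ x in T,
            (Metric.thickening (r k) (frontier Ω)).indicator (fun _ => (1:ℝ≥0∞)) x * c k := by
          apply lintegral_tsum
          intro k
          exact ((Measurable.indicator measurable_const (hthick_meas k)).mul
            measurable_const).aemeasurable
      _ ≤ ∑' k, ENNReal.ofReal (C * (r k)^δ) * c k := by
          apply ENNReal.tsum_le_tsum
          intro k
          rw [lintegral_mul_const _ (Measurable.indicator measurable_const (hthick_meas k)),
            lintegral_indicator_const (hthick_meas k), one_mul]
          apply mul_le_mul_left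
          calc (volume.restrict T) (Metric.thickening (r k) (frontier Ω))
              ≤ volume (Metric.thickening (r k) (frontier Ω)) := Measure.restrict_le_self _
            _ ≤ ENNReal.ofReal (C * (r k)^δ) := hvol (r k) ⟨hrpos k, hrle k⟩
  -- Step 5: sum the series
  have step5 : ∀ k, ENNReal.ofReal (C * (r k)^δ) * c k =
      ω * (ENNReal.ofReal A * (ENNReal.ofReal q)^k) := by
    intro k
    have h1 : (0:ℝ) ≤ (r (k+1)) ^ (-((n:ℝ)+s)) := Real.rpow_nonneg (hrpos (k+1)).le _
    have h2 : (0:ℝ) ≤ (r k)^n := by positivity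
    have h3 : (0:ℝ) ≤ C * (r k)^δ := by
      have := Real.rpow_nonneg (hrpos k).le δ; positivity
    rw [hc_def]
    calc ENNReal.ofReal (C * (r k)^δ) *
          (ENNReal.ofReal ((r (k+1)) ^ (-((n:ℝ)+s))) * (ENNReal.ofReal ((r k)^n) * ω))
        = ENNReal.ofReal ((r (k+1)) ^ (-((n:ℝ)+s)) * ((r k)^n) * (C * (r k)^δ)) * ω := by
          rw [ENNReal.ofReal_mul (mul_nonneg h1 h2), ENNReal.ofReal_mul h1]
          ring
      _ = ENNReal.ofReal (A * q^k) * ω := by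
          congr 1
          rw [hrsucc k]
          simp only [hr_def]
          rw [aux_arith n hR k, hA_def, hq_def]
      _ = ω * (ENNReal.ofReal A * (ENNReal.ofReal q)^k) := by
          rw [ENNReal.ofReal_mul hA0, ENNReal.ofReal_pow hq0]
          ring
  calc (∫⁻ x in T, ∫⁻ y in T, ENNReal.ofReal
        (|Set.indicator Ω (fun _ => (1:ℝ)) x - Set.indicator Ω (fun _ => (1:ℝ)) y| /
          dist x y ^ ((n : ℝ) + s)))
      ≤ ∑' k, ENNReal.ofReal (C * (r k)^δ) * c k := step4
    _ = ∑' k, ω * (ENNReal.ofReal A * (ENNReal.ofReal q)^k) := by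
        exact tsum_congr step5
    _ = B := by
        rw [ENNReal.tsum_mul_left, ENNReal.tsum_mul_left, ENNReal.tsum_geometric, hB_def]
    _ = ENNReal.ofReal B.toReal := (ENNReal.ofReal_toReal hB_top).symm
    _ ≤ ENNReal.ofReal (B.toReal + 1) := ENNReal.ofReal_le_ofReal (by linarith)
end

section
/- Let Ω = {x ∈ ℝ² : 1 < |x| < 2} and 0 < m < 3π − 4π ln 2. Set c₁ = (m + 3π)/(2m + 4π ln 2), c₂ = (2m − (m − π) ln 2)/(2m + 4π ln 2), and u(x) = −|x|²/4 + c₁ ln|x| + c₂. Then u > 0 on Ω ∪ ∂B₁, u = 0 on ∂B₂, −Δu = 1 in Ω, ∂u/∂ν = −(1/m)∫_{∂B₁} u dσ on ∂B₁, and ∂u/∂ν > −(1/m)∫_{∂Ω} u dσ on ∂B₂. -/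
open MeasureTheory Metric Set Real Filter Complex
open scoped ENNReal NNReal


lemma circleMap_inj_core (r : ℝ) (hr : r ≠ 0) {s t : ℝ} (h : |s - t| < 2 * π)
    (hst : circleMap 0 r s = circleMap 0 r t) : s = t := by
  simp only [circleMap_zero] at hst
  have h1 : Complex.exp (s * Complex.I) = Complex.exp (t * Complex.I) := by
    rcases mul_eq_mul_left_iff.1 hst with h' | h'
    · exact h'
    · exact absurd (Complex.ofReal_eq_zero.1 h') hr
  rw [Complex.exp_eq_exp_iff_exists_int] at h1
  obtain ⟨n, hn⟩ := h1
  have hn' : (s : ℂ) = t + n * (2 * π) := by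
    have h0 : ((s : ℂ) - (t + n * (2 * π))) * Complex.I = 0 := by rw [sub_mul]; rw [hn]; ring
    have h0' := mul_eq_zero.1 h0
    simp [Complex.I_ne_zero] at h0'
    linear_combination h0'
  have hs' : s = t + n * (2 * π) := by exact_mod_cast hn'
  have hb : |(n : ℝ) * (2 * π)| < 2 * π := by
    have : (n:ℝ) * (2*π) = s - t := by linarith
    rw [this]; exact h
  have hn0 : n = 0 := by
    by_contra hc
    have h1le : (1 : ℝ) ≤ |(n : ℝ)| := by exact_mod_cast Int.one_le_abs (by omega)
    rw [abs_mul] at hb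
    rw [abs_of_pos (by positivity : (0:ℝ) < 2*π)] at hb
    nlinarith [Real.pi_pos]
  simp [hn0] at hs'
  linarith

lemma circleMap_injOn (r : ℝ) (hr : r ≠ 0) :
    Set.InjOn (circleMap 0 r) (Ioc 0 (2 * π)) := by
  intro s hs t ht hst
  refine circleMap_inj_core r hr ?_ hst
  rw [abs_lt]
  constructor <;> nlinarith [hs.1, hs.2, ht.1, ht.2]

lemma arc_lower (r : ℝ) (hr : 0 < r) (a δ : ℝ) (hδ : 0 < δ) (hδ2 : δ ≤ 2 * π) :
    ENNReal.ofReal (2 * r * Real.sin (δ / 2)) ≤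
      μH[(1:ℝ)] (circleMap 0 r '' Icc a (a + δ)) := by
  set mid := a + δ / 2 with hmid
  set p : ℂ → ℝ := fun z => (z * Complex.exp (-(mid:ℝ) * Complex.I)).im with hp
  have hlip : LipschitzWith 1 p := by
    apply LipschitzWith.of_dist_le_mul
    intro z w
    rw [Real.dist_eq, Complex.dist_eq]
    have h1 : p z - p w = ((z - w) * Complex.exp (-(mid:ℝ) * Complex.I)).im := by
      simp [hp, sub_mul]
    rw [h1]
    refine le_trans (Complex.abs_im_le_norm _) (le_of_eq ?_)
    rw [norm_mul, Complex.norm_exp]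
    simp
  have hq : ∀ θ : ℝ, p (circleMap 0 r θ) = r * Real.sin (θ - mid) := by
    intro θ
    simp only [hp, circleMap_zero]
    rw [mul_assoc, ← Complex.exp_add]
    have h2 : (θ:ℂ) * Complex.I + -(mid:ℂ) * Complex.I = ((θ - mid : ℝ) : ℂ) * Complex.I := by
      push_cast; ring
    rw [h2, Complex.im_ofReal_mul, Complex.exp_ofReal_mul_I_im]
  have hivt : Icc (-(r * Real.sin (δ / 2))) (r * Real.sin (δ / 2)) ⊆
      (fun θ => p (circleMap 0 r θ)) '' Icc a (a + δ) := by
    have hcont : ContinuousOn (fun θ => p (circleMap 0 r θ)) (Icc a (a + δ)) :=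
      (hlip.continuous.comp (continuous_circleMap 0 r)).continuousOn
    have h1 := intermediate_value_Icc (by linarith : a ≤ a + δ) hcont
    have ha : p (circleMap 0 r a) = -(r * Real.sin (δ / 2)) := by
      rw [hq, show a - mid = -(δ/2) by rw [hmid]; ring, Real.sin_neg]; ring
    have hb : p (circleMap 0 r (a + δ)) = r * Real.sin (δ / 2) := by
      rw [hq]; rw [hmid, show a + δ - (a + δ/2) = δ/2 by ring]
    rw [ha, hb] at h1
    exact h1
  calc ENNReal.ofReal (2 * r * Real.sin (δ / 2))
      = μH[(1:ℝ)] (Icc (-(r * Real.sin (δ / 2))) (r * Real.sin (δ / 2)) : Set ℝ) := by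
        rw [MeasureTheory.hausdorffMeasure_real, Real.volume_Icc]
        congr 1; ring
    _ ≤ μH[(1:ℝ)] ((fun θ => p (circleMap 0 r θ)) '' Icc a (a + δ)) := measure_mono hivt
    _ = μH[(1:ℝ)] (p '' (circleMap 0 r '' Icc a (a + δ))) := by rw [Set.image_image]
    _ ≤ μH[(1:ℝ)] (circleMap 0 r '' Icc a (a + δ)) := by
        refine le_trans (hlip.hausdorffMeasure_image_le zero_le_one _) (le_of_eq ?_)
        simp

lemma iUnion_Ioc_cover (δ : ℝ) (hδ : 0 ≤ δ) (n : ℕ) :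
    ⋃ k ∈ Finset.range n, Ioc ((k : ℝ) * δ) (((k : ℝ) + 1) * δ) = Ioc 0 ((n : ℝ) * δ) := by
  induction n with
  | zero => simp
  | succ n ih =>
    rw [Finset.range_add_one]
    simp only [Finset.mem_insert, Set.iUnion_iUnion_eq_or_left]
    rw [ih, Set.union_comm, Ioc_union_Ioc_eq_Ioc]
    · push_cast; ring_nf
    · positivity
    · nlinarith [Nat.cast_nonneg (α := ℝ) n]


lemma circle_measure (r : ℝ) (hr : 0 < r) :
    μH[(1:ℝ)] (sphere (0:ℂ) r) = ENNReal.ofReal (2 * π * r) := by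
  apply le_antisymm
  · have h1 : sphere (0:ℂ) r = circleMap 0 r '' Ioc 0 (2*π) := by
      rw [image_circleMap_Ioc, abs_of_pos hr]
    rw [h1]
    refine le_trans ((lipschitzWith_circleMap 0 r).hausdorffMeasure_image_le zero_le_one _)
      (le_of_eq ?_)
    rw [MeasureTheory.hausdorffMeasure_real, Real.volume_Ioc]
    rw [ENNReal.rpow_one]
    rw [show ((Real.nnabs r : ℝ≥0) : ℝ≥0∞) = ENNReal.ofReal r by
      rw [Real.nnabs_of_nonneg hr.le]; rfl]
    rw [← ENNReal.ofReal_mul (le_of_lt hr)]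
    congr 1; ring
  · -- lower bound
    have key : ∀ n : ℕ, 2 ≤ n →
        ENNReal.ofReal ((n : ℝ) * (2 * r * Real.sin (π / n))) ≤ μH[(1:ℝ)] (sphere (0:ℂ) r) := by
      intro n hn
      set δ : ℝ := 2 * π / n with hδdef
      have hnpos : (0:ℝ) < n := by positivity
      have hδpos : 0 < δ := by positivity
      have hδle : δ ≤ π := by
        rw [hδdef, div_le_iff₀ hnpos]
        have : (2:ℝ) ≤ (n:ℝ) := by exact_mod_cast hn
        nlinarith [Real.pi_pos]
      have hδ2π : δ < 2 * π := by nlinarith [Real.pi_pos]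
      set A : ℕ → Set ℂ := fun k => circleMap 0 r '' Ioc ((k : ℝ) * δ) (((k : ℝ) + 1) * δ)
        with hA
      have hcover : sphere (0:ℂ) r = ⋃ k ∈ Finset.range n, A k := by
        simp only [hA, ← Set.image_iUnion]
        rw [iUnion_Ioc_cover δ (le_of_lt hδpos) n]
        rw [show (n : ℝ) * δ = 2 * π by rw [hδdef]; field_simp]
        rw [image_circleMap_Ioc, abs_of_pos hr]
      have hsub : ∀ k ∈ Finset.range n, Ioc ((k : ℝ) * δ) (((k : ℝ) + 1) * δ) ⊆ Ioc 0 (2*π) := by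
        intro k hk
        rw [Finset.mem_range] at hk
        apply Ioc_subset_Ioc
        · positivity
        · rw [show (2:ℝ) * π = (n:ℝ) * δ by rw [hδdef]; field_simp]
          have : (k : ℝ) + 1 ≤ (n : ℝ) := by exact_mod_cast hk
          nlinarith
      have hinj := circleMap_injOn r (ne_of_gt hr)
      have hdisj : Set.PairwiseDisjoint (↑(Finset.range n)) A := by
        intro i hi j hj hij
        simp only [hA]
        apply Set.disjoint_image_image
        intro s hs t ht hst
        have hs' := hsub i hi hs
        have ht' := hsub j hj ht
        have heq : s = t := hinj hs' ht' hst
        subst heq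
        apply hij
        have h1 : (i : ℝ) * δ < ((j : ℝ) + 1) * δ := lt_of_lt_of_le hs.1 ht.2
        have h2 : (j : ℝ) * δ < ((i : ℝ) + 1) * δ := lt_of_lt_of_le ht.1 hs.2
        have h1' : (i : ℝ) < (j : ℝ) + 1 :=
          lt_of_mul_lt_mul_right (by linarith) (le_of_lt hδpos)
        have h2' : (j : ℝ) < (i : ℝ) + 1 :=
          lt_of_mul_lt_mul_right (by linarith) (le_of_lt hδpos)
        have hij1 : i < j + 1 := by exact_mod_cast h1'
        have hij2 : j < i + 1 := by exact_mod_cast h2'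
        omega
      have hIccIoc : ∀ k : ℕ, A k =
          circleMap 0 r '' Icc ((k : ℝ) * δ) (((k : ℝ) + 1) * δ) \
            {circleMap 0 r ((k : ℝ) * δ)} := by
        intro k
        ext z
        simp only [hA, Set.mem_diff, Set.mem_image, Set.mem_singleton_iff]
        constructor
        · rintro ⟨t, ht, rfl⟩
          refine ⟨⟨t, Ioc_subset_Icc_self ht, rfl⟩, ?_⟩
          intro hzz
          have : t = (k:ℝ) * δ := by
            refine circleMap_inj_core r (ne_of_gt hr) ?_ hzz
            rw [abs_lt]
            constructor <;> nlinarith [ht.1, ht.2]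
          nlinarith [ht.1]
        · rintro ⟨⟨t, ht, rfl⟩, hne⟩
          refine ⟨t, ⟨?_, ht.2⟩, rfl⟩
          rcases eq_or_lt_of_le ht.1 with h | h
          · exact absurd (by rw [h]) hne
          · exact h
      have hmeas : ∀ k ∈ Finset.range n, MeasurableSet (A k) := by
        intro k _
        rw [hIccIoc k]
        exact (((isCompact_Icc).image (continuous_circleMap 0 r)).measurableSet).diff
          (measurableSet_singleton _)
      haveI : MeasureTheory.NoAtoms (μH[(1:ℝ)] : Measure ℂ) :=
        MeasureTheory.Measure.noAtoms_hausdorff ℂ one_pos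
      have harc : ∀ k : ℕ, ENNReal.ofReal (2 * r * Real.sin (π / n)) ≤ μH[(1:ℝ)] (A k) := by
        intro k
        have h1 := arc_lower r hr ((k:ℝ) * δ) δ hδpos (by linarith)
        rw [show (k:ℝ) * δ + δ = ((k:ℝ) + 1) * δ by ring] at h1
        have h2 : circleMap 0 r '' Icc ((k : ℝ) * δ) (((k : ℝ) + 1) * δ) ⊆
            A k ∪ {circleMap 0 r ((k : ℝ) * δ)} := by
          rw [hIccIoc k]
          intro z hz
          by_cases hzz : z = circleMap 0 r ((k : ℝ) * δ)
          · exact Or.inr hzz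
          · exact Or.inl ⟨hz, hzz⟩
        have h3 := le_trans h1 (measure_mono h2)
        have h4 := le_trans h3 (measure_union_le _ _)
        rw [@measure_singleton _ _ _ (MeasureTheory.Measure.nullSingletonClass_hausdorff ℂ one_pos), add_zero] at h4
        rwa [show δ / 2 = π / n by rw [hδdef]; ring] at h4
      calc ENNReal.ofReal ((n : ℝ) * (2 * r * Real.sin (π / n)))
          = (n : ℝ≥0∞) * ENNReal.ofReal (2 * r * Real.sin (π / n)) := by
            rw [ENNReal.ofReal_mul (le_of_lt hnpos)]
            congr 1
            exact ENNReal.ofReal_natCast n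
        _ = ∑ k ∈ Finset.range n, ENNReal.ofReal (2 * r * Real.sin (π / n)) := by
            rw [Finset.sum_const, Finset.card_range, nsmul_eq_mul]
        _ ≤ ∑ k ∈ Finset.range n, μH[(1:ℝ)] (A k) := Finset.sum_le_sum fun k _ => harc k
        _ = μH[(1:ℝ)] (⋃ k ∈ Finset.range n, A k) :=
            (measure_biUnion_finset hdisj hmeas).symm
        _ = μH[(1:ℝ)] (sphere (0:ℂ) r) := by rw [← hcover]
    -- limit argument
    have hsin : Tendsto (fun x : ℝ => Real.sin x / x) (nhdsWithin 0 {(0:ℝ)}ᶜ) (nhds 1) := by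
      have h := Real.hasDerivAt_sin 0
      rw [hasDerivAt_iff_tendsto_slope] at h
      rw [Real.cos_zero] at h
      refine h.congr fun x => ?_
      simp [slope_def_field]
    have hre : Tendsto (fun nn : ℕ => (nn : ℝ) * (2 * r * Real.sin (π / nn))) atTop
        (nhds (2 * π * r)) := by
      have h2 : Tendsto (fun nn : ℕ => π / (nn:ℝ)) atTop (nhdsWithin 0 {(0:ℝ)}ᶜ) := by
        rw [tendsto_nhdsWithin_iff]
        constructor
        · exact tendsto_const_div_atTop_nhds_zero_nat π
        · filter_upwards [eventually_ge_atTop 1] with nn hnn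
          have hnn' : (0:ℝ) < (nn:ℝ) := by exact_mod_cast hnn
          have hp : (0:ℝ) < π / nn := by positivity
          exact ne_of_gt hp
      have h3 := (hsin.comp h2).const_mul (2 * π * r)
      rw [mul_one] at h3
      refine h3.congr' ?_
      filter_upwards [eventually_ge_atTop 1] with nn hnn
      have hnn' : (0:ℝ) < (nn:ℝ) := by exact_mod_cast hnn
      have hπ : π ≠ 0 := ne_of_gt Real.pi_pos
      simp only [Function.comp_apply]
      field_simp
    have htend : Tendsto (fun nn : ℕ => ENNReal.ofReal ((nn : ℝ) * (2 * r * Real.sin (π / nn))))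
        atTop (nhds (ENNReal.ofReal (2 * π * r))) :=
      (ENNReal.continuous_ofReal.tendsto _).comp hre
    refine le_of_tendsto htend ?_
    filter_upwards [eventually_ge_atTop 2] with nn hnn
    exact key nn hnn

lemma sphere_measure_E (r : ℝ) (hr : 0 < r) :
    μH[(1:ℝ)] (Metric.sphere (0 : EuclideanSpace ℝ (Fin 2)) r) = ENNReal.ofReal (2 * π * r) := by
  set e := Complex.orthonormalBasisOneI.repr with he
  have h1 : Metric.sphere (0 : EuclideanSpace ℝ (Fin 2)) r = ⇑e '' Metric.sphere (0:ℂ) r := by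
    rw [e.image_sphere, map_zero]
  rw [h1, e.isometry.hausdorffMeasure_image (Or.inl zero_le_one), circle_measure r hr]

lemma sphere_integral (c r : ℝ) (hr : 0 < r) (f : EuclideanSpace ℝ (Fin 2) → ℝ)
    (hf : ∀ x : EuclideanSpace ℝ (Fin 2), ‖x‖ = r → f x = c) :
    ∫ y in Metric.sphere (0 : EuclideanSpace ℝ (Fin 2)) r, f y ∂μH[(1:ℝ)]
      = (2 * π * r) * c := by
  rw [setIntegral_congr_fun (g := fun _ => c) (isClosed_sphere.measurableSet)
    (fun y hy => hf y (by simpa [mem_sphere_zero_iff_norm] using hy))]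
  rw [setIntegral_const, measureReal_def, sphere_measure_E r hr, ENNReal.toReal_ofReal (by positivity),
    smul_eq_mul]

lemma key_fderiv (c₁ c₂ : ℝ) {x : EuclideanSpace ℝ (Fin 2)} (hx : x ≠ 0) :
    HasFDerivAt (fun y : EuclideanSpace ℝ (Fin 2) => -‖y‖^2/4 + c₁ * Real.log ‖y‖ + c₂)
      ((-(1/4) + c₁/2 / ‖x‖^2) • (2 • innerSL ℝ x)) x := by
  have hx2 : ‖x‖^2 ≠ 0 := by
    simpa using (norm_ne_zero_iff.2 hx)
  have hφ : HasFDerivAt (fun y : EuclideanSpace ℝ (Fin 2) => ‖y‖^2) (2 • innerSL ℝ x) x :=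
    (hasStrictFDerivAt_norm_sq x).hasFDerivAt
  have hg : HasDerivAt (fun t : ℝ => -(t/4) + c₁/2 * Real.log t + c₂)
      (-(1/4) + c₁/2 / ‖x‖^2) (‖x‖^2) := by
    have h1 : HasDerivAt (fun t : ℝ => -(t/4)) (-(1/4)) (‖x‖^2) := by
      exact (((hasDerivAt_id (‖x‖^2)).div_const 4).neg).congr_deriv (by norm_num)
    have h2 : HasDerivAt (fun t : ℝ => c₁/2 * Real.log t) (c₁/2 / ‖x‖^2) (‖x‖^2) := by
      simpa [div_eq_mul_inv] using (Real.hasDerivAt_log hx2).const_mul (c₁/2)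
    simpa using (h1.add h2).add_const c₂
  have hcomp := hg.comp_hasFDerivAt x hφ
  refine hcomp.congr_of_eventuallyEq (Filter.Eventually.of_forall fun y => ?_)
  simp only [Function.comp]
  rw [show ‖y‖^2 = ‖y‖^(2:ℕ) by norm_num, Real.log_pow]
  push_cast
  ring

/-- The Laplacian of `u : ℝⁿ → ℝ`, as the sum of the pure second partial derivatives. -/
noncomputable def lap {n : ℕ} (u : EuclideanSpace ℝ (Fin n) → ℝ)
    (x : EuclideanSpace ℝ (Fin n)) : ℝ :=
  ∑ i : Fin n,
    fderiv ℝ (fun y => fderiv ℝ u y (EuclideanSpace.single i 1)) x (EuclideanSpace.single i 1)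

lemma key_grad (c₁ c₂ : ℝ) {x : EuclideanSpace ℝ (Fin 2)} (hx : x ≠ 0) :
    HasGradientAt (fun y : EuclideanSpace ℝ (Fin 2) => -‖y‖^2/4 + c₁ * Real.log ‖y‖ + c₂)
      ((2 * (-(1/4) + c₁/2 / ‖x‖^2)) • x) x := by
  rw [hasGradientAt_iff_hasFDerivAt]
  refine (key_fderiv c₁ c₂ hx).congr_fderiv ?_
  ext v
  simp [InnerProductSpace.toDual_apply_apply, real_inner_smul_left]
  ring

lemma key_lap (c₁ c₂ : ℝ) {x : EuclideanSpace ℝ (Fin 2)} (hx : x ≠ 0) :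
    lap (fun y : EuclideanSpace ℝ (Fin 2) => -‖y‖^2/4 + c₁ * Real.log ‖y‖ + c₂) x = -1 := by
  have hx2 : ‖x‖^2 ≠ 0 := by simpa using (norm_ne_zero_iff.2 hx)
  have hφ : HasFDerivAt (fun y : EuclideanSpace ℝ (Fin 2) => ‖y‖^2) (2 • innerSL ℝ x) x :=
    (hasStrictFDerivAt_norm_sq x).hasFDerivAt
  have hstep : ∀ i : Fin 2,
      fderiv ℝ (fun y => fderiv ℝ (fun y : EuclideanSpace ℝ (Fin 2) =>
          -‖y‖^2/4 + c₁ * Real.log ‖y‖ + c₂) y (EuclideanSpace.single i 1)) x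
        (EuclideanSpace.single i 1)
      = (2 * (-(1/4) + c₁/2 / ‖x‖^2)) - 2 * c₁ * (x i)^2 / (‖x‖^2)^2 := by
    intro i
    have hEq : (fun y => fderiv ℝ (fun y : EuclideanSpace ℝ (Fin 2) =>
          -‖y‖^2/4 + c₁ * Real.log ‖y‖ + c₂) y (EuclideanSpace.single i 1)) =ᶠ[nhds x]
        (fun y => (2 * (-(1/4) + c₁/2 / ‖y‖^2)) * y i) := by
      filter_upwards [eventually_ne_nhds hx] with y hy
      rw [(key_fderiv c₁ c₂ hy).fderiv]
      fin_cases i <;>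
        simp [real_inner_smul_left, EuclideanSpace.inner_single_right] <;> ring
    rw [hEq.fderiv_eq]
    have hs : HasFDerivAt (fun y : EuclideanSpace ℝ (Fin 2) => 2 * (-(1/4) + c₁/2 / ‖y‖^2))
        ((-c₁ / (‖x‖^2)^2) • (2 • innerSL ℝ x)) x := by
      have hh : HasDerivAt (fun t : ℝ => 2 * (-(1/4) + c₁/2 / t)) (-c₁ / (‖x‖^2)^2) (‖x‖^2) := by
        have h2 := (((hasDerivAt_inv hx2).const_mul (c₁/2)).const_add (-(1/4))).const_mul 2
        have heq : (fun t:ℝ => 2 * (-(1/4) + c₁/2 * t⁻¹)) = (fun t:ℝ => 2 * (-(1/4) + c₁/2 / t)) := by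
          funext t; ring
        rw [heq] at h2
        refine h2.congr_deriv ?_
        field_simp
      exact HasDerivAt.comp_hasFDerivAt (h₂ := fun t : ℝ => 2 * (-(1/4) + c₁/2 / t)) (f := fun y : EuclideanSpace ℝ (Fin 2) => ‖y‖^2) x hh hφ
    have hproj : HasFDerivAt (fun y : EuclideanSpace ℝ (Fin 2) => y i)
        (EuclideanSpace.proj i : EuclideanSpace ℝ (Fin 2) →L[ℝ] ℝ) x := by
      exact (EuclideanSpace.proj i : EuclideanSpace ℝ (Fin 2) →L[ℝ] ℝ).hasFDerivAt
    have hmul := hs.mul hproj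
    rw [HasFDerivAt.fderiv (f := fun y : EuclideanSpace ℝ (Fin 2) => 2 * (-(1/4) + c₁/2 / ‖y‖^2) * y i) hmul]
    fin_cases i <;>
    · simp [real_inner_smul_left, EuclideanSpace.inner_single_right, PiLp.proj_apply,
        EuclideanSpace.single_apply]
      field_simp
      ring
  have hsum : (x 0)^2 + (x 1)^2 = ‖x‖^2 := by
    rw [EuclideanSpace.norm_eq, Real.sq_sqrt (by positivity)]
    simp [Fin.sum_univ_two, _root_.sq_abs]
  rw [lap, Fin.sum_univ_two, hstep 0, hstep 1]
  field_simp
  linear_combination (-8 * c₁) * hsum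

lemma v_pos (c₁ c₂ : ℝ) (hc₁ : 0 < c₁) (hv1 : 0 < -(1:ℝ)^2/4 + c₁ * Real.log 1 + c₂)
    (hv2 : -(2:ℝ)^2/4 + c₁ * Real.log 2 + c₂ = 0) {t : ℝ} (ht1 : 1 ≤ t) (ht2 : t < 2) :
    0 < -t^2/4 + c₁ * Real.log t + c₂ := by
  set v : ℝ → ℝ := fun s => -s^2/4 + c₁ * Real.log s + c₂ with hv
  show 0 < v t
  have hw : ∀ s : ℝ, s ≠ 0 → HasDerivAt v (-s/2 + c₁/s) s := by
    intro s hs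
    have h1 : HasDerivAt (fun s : ℝ => -s^2/4) (-s/2) s := by
      have := ((hasDerivAt_pow 2 s).div_const 4).neg
      refine (this.congr_of_eventuallyEq (Filter.Eventually.of_forall fun t => ?_)).congr_deriv ?_
      · show -t^2/4 = -(t^2/4); ring
      · simp; ring
    have h2 : HasDerivAt (fun s : ℝ => c₁ * Real.log s) (c₁/s) s := by
      simpa [div_eq_mul_inv, mul_comm] using (Real.hasDerivAt_log hs).const_mul c₁
    exact (h1.add h2).add_const c₂
  have hcont : ContinuousOn v (Icc 1 2) := by
    intro s hs
    exact ((hw s (by intro h; rw [h] at hs; exact absurd hs.1 (by norm_num))).continuousAt).continuousWithinAt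
  have hconc : StrictConcaveOn ℝ (Icc (1:ℝ) 2) v := by
    apply strictConcaveOn_of_deriv2_neg (convex_Icc 1 2) hcont
    intro s hs
    rw [interior_Icc] at hs
    have hs0 : (0:ℝ) < s := by linarith [hs.1]
    have hderiv_eq : deriv v =ᶠ[nhds s] (fun s => -s/2 + c₁/s) := by
      filter_upwards [IsOpen.mem_nhds isOpen_Ioi (show s ∈ Ioi (0:ℝ) from hs0)] with y hy
      exact (hw y (ne_of_gt hy)).deriv
    have hw2 : HasDerivAt (fun s : ℝ => -s/2 + c₁/s) (-1/2 - c₁/s^2) s := by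
      have h := (((hasDerivAt_id s).div_const 2).neg).add
        ((hasDerivAt_inv (ne_of_gt hs0)).const_mul c₁)
      refine (h.congr_of_eventuallyEq (Filter.Eventually.of_forall fun t => ?_)).congr_deriv ?_
      · show -t/2 + c₁/t = -(id t / 2) + c₁ * t⁻¹; simp only [id_eq]; ring
      · field_simp
        ring
    have : deriv (deriv v) s = -1/2 - c₁/s^2 := by
      rw [Filter.EventuallyEq.deriv_eq hderiv_eq]
      exact hw2.deriv
    simp only [Function.iterate_succ, Function.iterate_zero, Function.comp_apply, Function.id_def]
    rw [this]
    have : 0 < c₁/s^2 := by positivity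
    linarith
  rcases eq_or_lt_of_le ht1 with h | h
  · rw [← h]; exact hv1
  · have key := hconc.2 (show (1:ℝ) ∈ Icc (1:ℝ) 2 by norm_num)
      (show (2:ℝ) ∈ Icc (1:ℝ) 2 by norm_num) (by norm_num)
      (show 0 < 2 - t by linarith) (show 0 < t - 1 by linarith) (by ring)
    have hv1' : v 1 = -(1:ℝ)^2/4 + c₁ * Real.log 1 + c₂ := rfl
    have hv2' : v 2 = -(2:ℝ)^2/4 + c₁ * Real.log 2 + c₂ := rfl
    rw [show (2 - t) • (1:ℝ) + (t - 1) • (2:ℝ) = t by simp; ring] at key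
    rw [smul_eq_mul, smul_eq_mul, hv1', hv2', hv2, mul_zero, add_zero] at key
    have : 0 < (2 - t) * (-(1:ℝ)^2/4 + c₁ * Real.log 1 + c₂) := by
      apply mul_pos (by linarith) hv1
    exact lt_trans this key

theorem annulus_example (m : ℝ) (hm1 : 0 < m)
    (hm2 : m < 3 * Real.pi - 4 * Real.pi * Real.log 2) :
    let c₁ := (m + 3 * Real.pi) / (2 * m + 4 * Real.pi * Real.log 2)
    let c₂ := (2 * m - (m - Real.pi) * Real.log 2) / (2 * m + 4 * Real.pi * Real.log 2)
    let u : EuclideanSpace ℝ (Fin 2) → ℝ := fun x => -‖x‖ ^ 2 / 4 + c₁ * Real.log ‖x‖ + c₂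
    let Ω : Set (EuclideanSpace ℝ (Fin 2)) := {x | 1 < ‖x‖ ∧ ‖x‖ < 2}
    (∀ x, (x ∈ Ω ∨ x ∈ Metric.sphere (0 : EuclideanSpace ℝ (Fin 2)) 1) → 0 < u x) ∧
    (∀ x ∈ Metric.sphere (0 : EuclideanSpace ℝ (Fin 2)) 2, u x = 0) ∧
    (∀ x ∈ Ω, lap u x = -1) ∧
    (∀ x ∈ Metric.sphere (0 : EuclideanSpace ℝ (Fin 2)) 1,
      (inner ℝ (gradient u x) (-x) : ℝ) =
        -(1 / m) * ∫ y in Metric.sphere (0 : EuclideanSpace ℝ (Fin 2)) 1, u y ∂μH[(1:ℝ)]) ∧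
    (∀ x ∈ Metric.sphere (0 : EuclideanSpace ℝ (Fin 2)) 2,
      (inner ℝ (gradient u x) ((2:ℝ)⁻¹ • x) : ℝ) >
        -(1 / m) * ((∫ y in Metric.sphere (0 : EuclideanSpace ℝ (Fin 2)) 1, u y ∂μH[(1:ℝ)]) +
          (∫ y in Metric.sphere (0 : EuclideanSpace ℝ (Fin 2)) 2, u y ∂μH[(1:ℝ)]))) := by
  intro c₁ c₂ u Ω
  have hπ := Real.pi_pos
  have hL0 : 0 < Real.log 2 := Real.log_pos (by norm_num)
  have hL32 : Real.log 2 < 3/2 := lt_trans Real.log_two_lt_d9 (by norm_num)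
  have hD : 0 < 2*m + 4*Real.pi*Real.log 2 := by positivity
  have hDne : 2*m + 4*Real.pi*Real.log 2 ≠ 0 := ne_of_gt hD
  have hmne : m ≠ 0 := ne_of_gt hm1
  have hc₁ : c₁ = (m + 3*Real.pi) / (2*m + 4*Real.pi*Real.log 2) := rfl
  have hc₂ : c₂ = (2*m - (m - Real.pi)*Real.log 2) / (2*m + 4*Real.pi*Real.log 2) := rfl
  have hu : u = fun x : EuclideanSpace ℝ (Fin 2) => -‖x‖^2/4 + c₁ * Real.log ‖x‖ + c₂ := rfl
  have hc₁pos : 0 < c₁ := by rw [hc₁]; positivity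
  have hv1 : 0 < -(1:ℝ)^2/4 + c₁ * Real.log 1 + c₂ := by
    have h : -(1:ℝ)^2/4 + c₁ * Real.log 1 + c₂
        = (m*(6 - 4*Real.log 2))/(4*(2*m + 4*Real.pi*Real.log 2)) := by
      rw [Real.log_one, hc₁, hc₂]
      field_simp
      ring
    rw [h]
    apply div_pos
    · nlinarith
    · linarith
  have hv2 : -(2:ℝ)^2/4 + c₁ * Real.log 2 + c₂ = 0 := by
    rw [hc₁, hc₂]
    field_simp
    ring
  have hint1 : ∫ y in Metric.sphere (0 : EuclideanSpace ℝ (Fin 2)) 1, u y ∂μH[(1:ℝ)]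
      = (2*Real.pi*1) * (-(1:ℝ)^2/4 + c₁ * Real.log 1 + c₂) := by
    apply sphere_integral _ 1 one_pos
    intro z hz
    rw [hu]
    simp only
    rw [hz]
  have hint2 : ∫ y in Metric.sphere (0 : EuclideanSpace ℝ (Fin 2)) 2, u y ∂μH[(1:ℝ)]
      = 0 := by
    have h := sphere_integral (-(2:ℝ)^2/4 + c₁ * Real.log 2 + c₂) 2 two_pos u
      (fun z hz => by rw [hu]; simp only; rw [hz])
    rw [h, hv2, mul_zero]
  refine ⟨?_, ?_, ?_, ?_, ?_⟩
  · -- positivity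
    intro x hx
    have ht : 1 ≤ ‖x‖ ∧ ‖x‖ < 2 := by
      rcases hx with h | h
      · exact ⟨le_of_lt h.1, h.2⟩
      · rw [mem_sphere_zero_iff_norm] at h
        rw [h]
        norm_num
    exact v_pos c₁ c₂ hc₁pos hv1 hv2 ht.1 ht.2
  · -- zero on outer boundary
    intro x hx
    rw [mem_sphere_zero_iff_norm] at hx
    show -‖x‖^2/4 + c₁ * Real.log ‖x‖ + c₂ = 0
    rw [hx]
    exact hv2
  · -- Laplacian
    intro x hx
    have hx0 : x ≠ 0 := by
      intro h
      rw [h] at hx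
      have h1 : (1:ℝ) < ‖(0 : EuclideanSpace ℝ (Fin 2))‖ := hx.1
      simp at h1
      exact absurd h1 (by norm_num)
    rw [hu]
    exact key_lap c₁ c₂ hx0
  · -- inner boundary Neumann condition
    intro x hx
    rw [mem_sphere_zero_iff_norm] at hx
    have hx0 : x ≠ 0 := by
      intro h; rw [h] at hx; simp at hx
    have hgrad : gradient u x = (2 * (-(1/4) + c₁/2 / ‖x‖^2)) • x := by
      rw [hu]; exact (key_grad c₁ c₂ hx0).gradient
    rw [hint1, hgrad]
    rw [inner_neg_right, real_inner_smul_left, real_inner_self_eq_norm_sq, hx]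
    rw [Real.log_one, hc₁, hc₂]
    field_simp
    ring
  · -- outer boundary inequality
    intro x hx
    rw [mem_sphere_zero_iff_norm] at hx
    have hx0 : x ≠ 0 := by
      intro h; rw [h] at hx; simp at hx
    have hgrad : gradient u x = (2 * (-(1/4) + c₁/2 / ‖x‖^2)) • x := by
      rw [hu]; exact (key_grad c₁ c₂ hx0).gradient
    rw [hint1, hint2, hgrad]
    rw [real_inner_smul_left, real_inner_smul_right, real_inner_self_eq_norm_sq, hx]
    rw [gt_iff_lt, ← sub_pos]
    have h2 : (0:ℝ) < 3*(3*Real.pi - m - 4*Real.pi*Real.log 2)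
        / (2*(2*m + 4*Real.pi*Real.log 2)) :=
      div_pos (by linarith) (by linarith)
    refine lt_of_lt_of_eq h2 ?_
    rw [Real.log_one, hc₁, hc₂]
    field_simp
    ring
end
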